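/- arXiv:1306.2093 — 4 statements merged into one kernel-verified Lean document; each statement's English description precedes it below -/
import Mathlib

section
/- (Subadditivity of the total mixed p-mean modulus over partitions into cubes.) Let 0 < p < ∞ and r ∈ ℕ^d. If a cube 𝕀 ⊂ ℝ^d is the union 𝕀 = ⋃_{j=1}^n 𝕀_j of cubes 𝕀_j with pairwise disjoint interiors, then there is a constant C depending only on r, d and p such that for every f ∈ L_p(𝕀) and every t ∈ ℝ₊^d: ∑_{j=1}^n W_r(f,t)_{p,𝕀_j}^p ≤ C · W_r(f,t)_{p,𝕀}^p. -/
open MeasureTheory ENNReal NNReal Finset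

/-- The mixed `r`-th difference operator `Δ_h^r` applied to `f` at `x`. -/
noncomputable def mixedDiff {d : ℕ} (r : Fin d → ℕ) (h : Fin d → ℝ)
    (f : (Fin d → ℝ) → ℝ) (x : Fin d → ℝ) : ℝ :=
  ∑ j : (i : Fin d) → Fin (r i + 1),
    (∏ i, (-1 : ℝ) ^ (r i - (j i : ℕ)) * ((r i).choose (j i) : ℝ)) *
      f (fun i => x i + (j i : ℝ) * h i)

/-- The `d`-parallelepiped `Q = ∏ [a_i, b_i]`. -/
def box {d : ℕ} (a b : Fin d → ℝ) : Set (Fin d → ℝ) :=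
  Set.univ.pi fun i => Set.Icc (a i) (b i)

/-- `Q_y = {x ∈ Q : x_i, x_i + y_i ∈ [a_i,b_i] ∀ i}`. -/
def boxShift {d : ℕ} (a b : Fin d → ℝ) (y : Fin d → ℝ) : Set (Fin d → ℝ) :=
  {x | ∀ i, x i ∈ Set.Icc (a i) (b i) ∧ x i + y i ∈ Set.Icc (a i) (b i)}

/-- The `L_p` quasi-norm of `f` on a set `S` (essential supremum for `p = ∞`). -/
noncomputable def pNorm {d : ℕ} (p : ℝ≥0∞) (f : (Fin d → ℝ) → ℝ)
    (S : Set (Fin d → ℝ)) : ℝ≥0∞ :=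
  eLpNorm f p (volume.restrict S)

/-- The mixed `r`-th modulus of smoothness `ω_r(f,t)_{p,Q}`. -/
noncomputable def modulus {d : ℕ} (p : ℝ≥0∞) (r : Fin d → ℕ) (f : (Fin d → ℝ) → ℝ)
    (a b : Fin d → ℝ) (t : Fin d → ℝ) : ℝ≥0∞ :=
  ⨆ h ∈ {h : Fin d → ℝ | ∀ i, |h i| ≤ t i},
    pNorm p (mixedDiff r h f) (boxShift a b fun i => (r i : ℝ) * h i)

/-- `r(e)` : the vector with coordinates `r_i` on `e` and `0` off `e`. -/
def restrictOrder {d : ℕ} (r : Fin d → ℕ) (e : Finset (Fin d)) : Fin d → ℕ :=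
  fun i => if i ∈ e then r i else 0

/-- The total mixed modulus of smoothness `Ω_r(f,t)_{p,Q}`. -/
noncomputable def totalModulus {d : ℕ} (p : ℝ≥0∞) (r : Fin d → ℕ) (f : (Fin d → ℝ) → ℝ)
    (a b : Fin d → ℝ) (t : Fin d → ℝ) : ℝ≥0∞ :=
  ∑ e ∈ Finset.univ.powerset.erase ∅, modulus p (restrictOrder r e) f a b t

/-- `φ ∈ 𝒫_r` : `φ` is a polynomial of degree at most `r_i - 1` in the variable `x_i`. -/
def IsPolyDeg {d : ℕ} (r : Fin d → ℕ) (φ : (Fin d → ℝ) → ℝ) : Prop :=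
  ∃ P : MvPolynomial (Fin d) ℝ, (∀ i, P.degreeOf i < r i) ∧ ∀ x, φ x = MvPolynomial.eval x P

/-- The error `E_r(f)_{p,Q}` of best approximation by polynomials from `𝒫_r`. -/
noncomputable def bestApprox {d : ℕ} (p : ℝ≥0∞) (r : Fin d → ℕ) (f : (Fin d → ℝ) → ℝ)
    (a b : Fin d → ℝ) : ℝ≥0∞ :=
  ⨅ φ ∈ {φ : (Fin d → ℝ) → ℝ | IsPolyDeg r φ}, pNorm p (fun x => f x - φ x) (box a b)

/-- The mixed `p`-mean modulus of smoothness `w_r(f,t)_{p,Q}`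
(the outer mean integral is replaced by a supremum when `p = ∞`). -/
noncomputable def meanModulus {d : ℕ} (p : ℝ≥0∞) (r : Fin d → ℕ) (f : (Fin d → ℝ) → ℝ)
    (a b : Fin d → ℝ) (t : Fin d → ℝ) : ℝ≥0∞ :=
  if p = ∞ then modulus p r f a b t
  else
    ((∏ i, (ENNReal.ofReal (t i))⁻¹) *
        ∫⁻ h in {h : Fin d → ℝ | ∀ i, |h i| ≤ t i},
          ∫⁻ x in boxShift a b (fun i => (r i : ℝ) * h i),
            (‖mixedDiff r h f x‖₊ : ℝ≥0∞) ^ p.toReal) ^ (1 / p.toReal)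

/-- The total mixed `p`-mean modulus of smoothness `W_r(f,t)_{p,Q}`. -/
noncomputable def totalMeanModulus {d : ℕ} (p : ℝ≥0∞) (r : Fin d → ℕ) (f : (Fin d → ℝ) → ℝ)
    (a b : Fin d → ℝ) (t : Fin d → ℝ) : ℝ≥0∞ :=
  ∑ e ∈ Finset.univ.powerset.erase ∅, meanModulus p (restrictOrder r e) f a b t

/-- The cube with lower-left corner `c` and side length `s`. -/
def cube {d : ℕ} (c : Fin d → ℝ) (s : ℝ) : Set (Fin d → ℝ) :=
  box c (fun i => c i + s)

section Aux

lemma boxShift_measurableSet {d : ℕ} (a b y : Fin d → ℝ) :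
    MeasurableSet (boxShift a b y) := by
  have : boxShift a b y = ⋂ i,
      ((fun x : Fin d → ℝ => x i) ⁻¹' Set.Icc (a i) (b i) ∩
        (fun x : Fin d → ℝ => x i + y i) ⁻¹' Set.Icc (a i) (b i)) := by
    ext x
    simp only [boxShift, Set.mem_setOf_eq, Set.mem_iInter, Set.mem_inter_iff,
      Set.mem_preimage]
  rw [this]
  exact MeasurableSet.iInter fun i =>
    ((measurable_pi_apply i) measurableSet_Icc).inter
      ((show Measurable (fun x : Fin d → ℝ => x i + y i) by fun_prop) measurableSet_Icc)

lemma cube_convex {d : ℕ} (c : Fin d → ℝ) (s : ℝ) : Convex ℝ (cube c s) :=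
  convex_pi fun i _ => convex_Icc _ _

lemma cube_inter_null {d : ℕ} {c c' : Fin d → ℝ} {s s' : ℝ}
    (h : Disjoint (interior (cube c s)) (interior (cube c' s'))) :
    volume (cube c s ∩ cube c' s') = 0 := by
  have hsub : cube c s ∩ cube c' s' ⊆ frontier (cube c s) ∪ frontier (cube c' s') := by
    intro x hx
    by_cases hx1 : x ∈ interior (cube c s)
    · have hx2 : x ∉ interior (cube c' s') := fun hx2 =>
        Set.disjoint_left.1 h hx1 hx2
      exact Or.inr ⟨subset_closure hx.2, hx2⟩
    · exact Or.inl ⟨subset_closure hx.1, hx1⟩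
  refine measure_mono_null hsub ?_
  rw [measure_union_null_iff]
  exact ⟨(cube_convex c s).addHaar_frontier volume,
    (cube_convex c' s').addHaar_frontier volume⟩

/-- Sum of lintegrals over a.e.-disjoint measurable subsets of `T` is at most the
lintegral over `T`. No measurability of `g` is needed. -/
lemma sum_lintegral_le {d n : ℕ} (S : Fin n → Set (Fin d → ℝ)) (T : Set (Fin d → ℝ))
    (hsub : ∀ j, S j ⊆ T) (hmeas : ∀ j, MeasurableSet (S j))
    (hd : ∀ j j', j ≠ j' → volume (S j ∩ S j') = 0) (g : (Fin d → ℝ) → ℝ≥0∞) :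
    ∑ j, ∫⁻ x in S j, g x ≤ ∫⁻ x in T, g x := by
  rw [← lintegral_finset_sum_measure]
  refine lintegral_mono' (MeasureTheory.Measure.le_iff.2 fun A hA => ?_) le_rfl
  rw [Measure.coe_finset_sum, Finset.sum_apply, Measure.restrict_apply hA]
  have := measure_biUnion_finset₀ (μ := volume) (s := Finset.univ)
    (f := fun j => A ∩ S j)
    (fun j _ j' _ hjj => measure_mono_null
      (by intro x hx; exact ⟨hx.1.2, hx.2.2⟩) (hd j j' hjj))
    (fun j _ => (hA.inter (hmeas j)).nullMeasurableSet)
  simp only [Measure.restrict_apply hA]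
  rw [← this]
  refine measure_mono ?_
  intro x hx
  simp only [Set.mem_iUnion] at hx
  obtain ⟨j, -, hxA, hxS⟩ := hx
  exact ⟨hxA, hsub j hxS⟩

lemma finset_rpow_sum_le {ι : Type*} (E : Finset ι) (a : ι → ℝ≥0∞) {q : ℝ} (hq : 0 < q) :
    (∑ e ∈ E, a e) ^ q ≤ (E.card : ℝ≥0∞) ^ q * ∑ e ∈ E, a e ^ q := by
  rcases E.eq_empty_or_nonempty with rfl | hE
  · simp [ENNReal.zero_rpow_of_pos hq]
  obtain ⟨e₀, he₀, hsup⟩ := Finset.exists_mem_eq_sup E hE a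
  calc (∑ e ∈ E, a e) ^ q ≤ ((E.card : ℝ≥0∞) * E.sup a) ^ q := by
        refine ENNReal.rpow_le_rpow ?_ hq.le
        have := Finset.sum_le_card_nsmul E a (E.sup a) (fun e he => Finset.le_sup he)
        rwa [nsmul_eq_mul] at this
    _ = (E.card : ℝ≥0∞) ^ q * (E.sup a) ^ q :=
        ENNReal.mul_rpow_of_nonneg _ _ hq.le
    _ ≤ (E.card : ℝ≥0∞) ^ q * ∑ e ∈ E, a e ^ q := by
        refine mul_le_mul_right ?_ _
        rw [hsup]
        exact Finset.single_le_sum (f := fun e => a e ^ q) (fun _ _ => zero_le) he₀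

lemma finset_sum_rpow_le {ι : Type*} (E : Finset ι) (a : ι → ℝ≥0∞) {q : ℝ} (hq : 0 < q) :
    ∑ e ∈ E, a e ^ q ≤ (E.card : ℝ≥0∞) * (∑ e ∈ E, a e) ^ q := by
  have := Finset.sum_le_card_nsmul E (fun e => a e ^ q) ((∑ e ∈ E, a e) ^ q)
    (fun e he => ENNReal.rpow_le_rpow
      (Finset.single_le_sum (fun _ _ => zero_le) he) hq.le)
  rwa [nsmul_eq_mul] at this

end Aux

lemma finset_sum_lintegral_le {α ι : Type*} [MeasurableSpace α] (μ : MeasureTheory.Measure α)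
    (s : Finset ι) (F : ι → α → ℝ≥0∞) :
    ∑ j ∈ s, ∫⁻ a, F j a ∂μ ≤ ∫⁻ a, ∑ j ∈ s, F j a ∂μ := by
  classical
  induction s using Finset.cons_induction with
  | empty => simp
  | cons j s hj ih =>
    calc ∑ k ∈ Finset.cons j s hj, ∫⁻ a, F k a ∂μ
        = (∫⁻ a, F j a ∂μ) + ∑ k ∈ s, ∫⁻ a, F k a ∂μ := Finset.sum_cons hj
      _ ≤ (∫⁻ a, F j a ∂μ) + ∫⁻ a, ∑ k ∈ s, F k a ∂μ := add_le_add_right ih _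
      _ ≤ ∫⁻ a, F j a + ∑ k ∈ s, F k a ∂μ := MeasureTheory.le_lintegral_add _ _
      _ = ∫⁻ a, ∑ k ∈ Finset.cons j s hj, F k a ∂μ := by exact lintegral_congr fun a => (Finset.sum_cons (M := ℝ≥0∞) (f := fun k => F k a) hj).symm

lemma boxShift_subset_box {d : ℕ} (a b y : Fin d → ℝ) :
    boxShift a b y ⊆ box a b := by
  intro x hx
  exact fun i _ => (hx i).1

lemma boxShift_mono {d : ℕ} {a b a' b' : Fin d → ℝ}
    (h : box a b ⊆ box a' b') (y : Fin d → ℝ) :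
    boxShift a b y ⊆ boxShift a' b' y := by
  intro x hx
  have h1 : x ∈ box a b := fun i _ => (hx i).1
  have h2 : (fun i => x i + y i) ∈ box a b := fun i _ => (hx i).2
  exact fun i => ⟨h h1 i (Set.mem_univ i), h h2 i (Set.mem_univ i)⟩

/-- **Subadditivity of the total mixed `p`-mean modulus over partitions into cubes.**
If the cube `𝕀` is the union of cubes `𝕀_j`, `j = 1,…,n`, with pairwise disjoint interiors,
then `∑_j W_r(f,t)_{p,𝕀_j}^p ≤ C · W_r(f,t)_{p,𝕀}^p` with `C = C(r,d,p)`. -/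
theorem totalMeanModulus_subadditive (d : ℕ) (p : ℝ≥0∞) (hp : 0 < p) (hp' : p ≠ ∞)
    (r : Fin d → ℕ) (hr : ∀ i, 1 ≤ r i) :
    ∃ C : ℝ≥0, 0 < C ∧
      ∀ (n : ℕ) (c : Fin n → Fin d → ℝ) (s : Fin n → ℝ) (c₀ : Fin d → ℝ) (s₀ : ℝ),
        (∀ j, 0 ≤ s j) → 0 ≤ s₀ →
        (⋃ j, cube (c j) (s j)) = cube c₀ s₀ →
        (Pairwise fun j j' =>
          Disjoint (interior (cube (c j) (s j))) (interior (cube (c j') (s j')))) →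
        ∀ f : (Fin d → ℝ) → ℝ, MemLp f p (volume.restrict (cube c₀ s₀)) →
          ∀ t : Fin d → ℝ, (∀ i, 0 ≤ t i) →
            ∑ j, (totalMeanModulus p r f (c j) (fun i => c j i + s j) t) ^ p.toReal ≤
              C * (totalMeanModulus p r f c₀ (fun i => c₀ i + s₀) t) ^ p.toReal := by
  classical
  have hq : 0 < p.toReal := ENNReal.toReal_pos hp.ne' hp'
  set q := p.toReal with hqdef
  set E : Finset (Finset (Fin d)) := Finset.univ.powerset.erase ∅ with hE
  set K : ℝ≥0∞ := (E.card : ℝ≥0∞) ^ q * (E.card : ℝ≥0∞) + 1 with hK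
  have hKne : K ≠ ∞ := by
    rw [hK]
    exact ENNReal.add_ne_top.2 ⟨ENNReal.mul_ne_top
      (ENNReal.rpow_ne_top_of_nonneg hq.le (ENNReal.natCast_ne_top _))
      (ENNReal.natCast_ne_top _), ENNReal.one_ne_top⟩
  have hKpos : K ≠ 0 := by
    rw [hK]
    simp
  refine ⟨K.toNNReal, ENNReal.toNNReal_pos hKpos hKne, ?_⟩
  intro n c s c₀ s₀ hs hs₀ hunion hdisj f _ t _
  rw [ENNReal.coe_toNNReal hKne]
  -- each small cube is contained in the big cube
  have hcube_sub : ∀ j, cube (c j) (s j) ⊆ cube c₀ s₀ := by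
    intro j
    rw [← hunion]
    exact Set.subset_iUnion (fun j => cube (c j) (s j)) j
  -- the core estimate for a fixed `e`
  have core : ∀ e ∈ E,
      ∑ j, (meanModulus p (restrictOrder r e) f (c j) (fun i => c j i + s j) t) ^ q
        ≤ (meanModulus p (restrictOrder r e) f c₀ (fun i => c₀ i + s₀) t) ^ q := by
    intro e _
    set r' := restrictOrder r e with hr'
    have hpow : ∀ x : ℝ≥0∞, (x ^ (1 / q)) ^ q = x := fun x => by
      rw [← ENNReal.rpow_mul, one_div_mul_cancel hq.ne', ENNReal.rpow_one]
    simp only [meanModulus, if_neg hp', ← hqdef, hpow]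
    rw [← Finset.mul_sum]
    refine mul_le_mul_right ?_ _
    -- pull the sum inside the h-integral
    calc ∑ j, ∫⁻ h in {h : Fin d → ℝ | ∀ i, |h i| ≤ t i},
            ∫⁻ x in boxShift (c j) (fun i => c j i + s j) (fun i => (r' i : ℝ) * h i),
              (‖mixedDiff r' h f x‖₊ : ℝ≥0∞) ^ q
        ≤ ∫⁻ h in {h : Fin d → ℝ | ∀ i, |h i| ≤ t i},
            ∑ j, ∫⁻ x in boxShift (c j) (fun i => c j i + s j) (fun i => (r' i : ℝ) * h i),
              (‖mixedDiff r' h f x‖₊ : ℝ≥0∞) ^ q :=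
          finset_sum_lintegral_le _ Finset.univ _
      _ ≤ ∫⁻ h in {h : Fin d → ℝ | ∀ i, |h i| ≤ t i},
            ∫⁻ x in boxShift c₀ (fun i => c₀ i + s₀) (fun i => (r' i : ℝ) * h i),
              (‖mixedDiff r' h f x‖₊ : ℝ≥0∞) ^ q := by
          refine lintegral_mono fun h => ?_
          refine sum_lintegral_le _ _ ?_ (fun j => boxShift_measurableSet _ _ _) ?_ _
          · intro j
            exact boxShift_mono (hcube_sub j) _
          · intro j j' hjj
            refine measure_mono_null ?_ (cube_inter_null (hdisj hjj))
            exact Set.inter_subset_inter (boxShift_subset_box _ _ _)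
              (boxShift_subset_box _ _ _)
  -- now combine over `e`
  calc ∑ j, (totalMeanModulus p r f (c j) (fun i => c j i + s j) t) ^ q
      ≤ ∑ j, ((E.card : ℝ≥0∞) ^ q *
          ∑ e ∈ E, (meanModulus p (restrictOrder r e) f (c j) (fun i => c j i + s j) t) ^ q) := by
        refine Finset.sum_le_sum fun j _ => ?_
        exact finset_rpow_sum_le E _ hq
    _ = (E.card : ℝ≥0∞) ^ q * ∑ e ∈ E,
          ∑ j, (meanModulus p (restrictOrder r e) f (c j) (fun i => c j i + s j) t) ^ q := by
        rw [← Finset.mul_sum, Finset.sum_comm]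
    _ ≤ (E.card : ℝ≥0∞) ^ q * ∑ e ∈ E,
          (meanModulus p (restrictOrder r e) f c₀ (fun i => c₀ i + s₀) t) ^ q :=
        mul_le_mul_right (Finset.sum_le_sum core) _
    _ ≤ (E.card : ℝ≥0∞) ^ q * ((E.card : ℝ≥0∞) *
          (∑ e ∈ E, meanModulus p (restrictOrder r e) f c₀ (fun i => c₀ i + s₀) t) ^ q) :=
        mul_le_mul_right (finset_sum_rpow_le E _ hq) _
    _ ≤ K * (totalMeanModulus p r f c₀ (fun i => c₀ i + s₀) t) ^ q := by
        rw [totalMeanModulus, ← hE, ← mul_assoc]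
        exact mul_le_mul_left (by rw [hK]; exact le_self_add) _
end

section
/- (Difference representation formula.) Let r ∈ ℕ^d and let a_k (0 < k ≤ r) and b_e (∅ ≠ e ⊂ [d]) be the coefficients of the polynomial identity 1 = ∑_{0<k≤r} a_k x^k + ∑_{∅≠e⊂[d]} b_e ∏_{i∈e}(x_i−1)^{r_i}. Then for every function f : ℝ^d → ℝ and all x, h ∈ ℝ^d: f(x) = ∑_{0 < k ≤ r} a_k f(x + kh) + ∑_{∅ ≠ e ⊂ [d]} b_e Δ_h^{r(e)}(f,x), where kh = (k₁h₁,…,k_d h_d). In particular, if f ∈ L_p^loc(ℝ^d) satisfies Δ_h^{r(e)}(f,x) = 0 for all nonempty e ⊂ [d] and almost all (x,h), then f(x) = ∑_{0 < k ≤ r} a_k f(x + kh) for almost all (x,h) ∈ ℝ^d × ℝ^d. -/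
open MeasureTheory ENNReal NNReal Finset

/-- `f ∈ L_p^loc(ℝ^d)` : every point has a neighborhood on which `f` is `L_p`. -/
def MemLpLoc {d : ℕ} (p : ℝ≥0∞) (f : (Fin d → ℝ) → ℝ) : Prop :=
  ∀ x : Fin d → ℝ, ∃ V ∈ nhds x, MemLp f p (volume.restrict V)

noncomputable def WCoef {d : ℕ} (r : Fin d → ℕ) (e : Finset (Fin d))
    (m : (i : Fin d) → Fin (r i + 1)) : ℝ :=
  ∏ i, (if i ∈ e then (-1 : ℝ) ^ (r i - (m i : ℕ)) * ((r i).choose (m i) : ℝ)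
    else if (m i : ℕ) = 0 then 1 else 0)

lemma binom_expand (n : ℕ) (y : ℝ) :
    (y - 1) ^ n =
      ∑ j : Fin (n + 1), ((-1 : ℝ) ^ (n - (j : ℕ)) * (n.choose j : ℝ)) * y ^ (j : ℕ) := by
  rw [Fin.sum_univ_eq_sum_range (fun j => ((-1 : ℝ) ^ (n - j) * (n.choose j : ℝ)) * y ^ j) (n+1)]
  rw [sub_eq_add_neg, add_pow]
  refine Finset.sum_congr rfl fun j hj => ?_
  ring

lemma prod_expand {d : ℕ} (r : Fin d → ℕ) (e : Finset (Fin d)) (x : Fin d → ℝ) :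
    ∏ i ∈ e, (x i - 1) ^ (r i)
      = ∑ m : (i : Fin d) → Fin (r i + 1), WCoef r e m * ∏ i, x i ^ (m i : ℕ) := by
  classical
  have h1 : ∏ i : Fin d, (if i ∈ e then (x i - 1) ^ (r i) else 1) = ∏ i ∈ e, (x i - 1) ^ (r i) := by
    rw [Finset.prod_ite_mem, Finset.univ_inter]
  rw [← h1]
  have h2 : ∀ i : Fin d, (if i ∈ e then (x i - 1) ^ (r i) else 1)
      = ∑ j : Fin (r i + 1),
          (if i ∈ e then (-1 : ℝ) ^ (r i - (j : ℕ)) * ((r i).choose j : ℝ)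
            else if (j : ℕ) = 0 then 1 else 0) * x i ^ (j : ℕ) := by
    intro i
    by_cases hi : i ∈ e
    · simp only [hi, if_true]
      exact binom_expand (r i) (x i)
    · simp only [hi, if_false]
      rw [Finset.sum_eq_single (0 : Fin (r i + 1))]
      · simp
      · intro j _ hj
        have hne : (j : ℕ) ≠ 0 := by
          intro h0
          exact hj (Fin.ext (by simpa using h0))
        simp [hne]
      · simp
  rw [Finset.prod_congr rfl fun i _ => h2 i, Finset.prod_univ_sum, Fintype.piFinset_univ]
  refine Finset.sum_congr rfl fun m _ => ?_
  rw [WCoef, ← Finset.prod_mul_distrib]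

lemma restrictOrder_le {d : ℕ} (r : Fin d → ℕ) (e : Finset (Fin d)) (i : Fin d) :
    restrictOrder r e i ≤ r i := by
  unfold restrictOrder; split <;> simp

lemma mixedDiff_expand {d : ℕ} (r : Fin d → ℕ) (e : Finset (Fin d)) (h : Fin d → ℝ)
    (f : (Fin d → ℝ) → ℝ) (x : Fin d → ℝ) :
    mixedDiff (restrictOrder r e) h f x
      = ∑ m : (i : Fin d) → Fin (r i + 1), WCoef r e m * f (fun i => x i + (m i : ℝ) * h i) := by
  classical
  unfold mixedDiff
  refine Finset.sum_of_injOn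
    (fun j i => Fin.castLE (Nat.succ_le_succ (restrictOrder_le r e i)) (j i)) ?_ ?_ ?_ ?_
  · intro j _ j' _ hjj
    funext i
    exact Fin.ext (congrArg (fun z => ((z i : Fin (r i + 1)) : ℕ)) hjj)
  · intro j _
    exact Finset.mem_coe.2 (Finset.mem_univ _)
  · intro m _ hm
    have hex : ∃ i, ¬ ((m i : ℕ) < restrictOrder r e i + 1) := by
      by_contra hcon
      push_neg at hcon
      apply hm
      refine ⟨fun i => ⟨(m i : ℕ), hcon i⟩, by simp, ?_⟩
      funext i
      exact Fin.ext rfl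
    obtain ⟨i, hi⟩ := hex
    have hie : i ∉ e := by
      intro hie
      apply hi
      have := (m i).isLt
      simpa [restrictOrder, hie] using this
    have hmi : (m i : ℕ) ≠ 0 := by
      intro h0
      apply hi
      simp [h0]
    apply mul_eq_zero_of_left
    rw [WCoef]
    rw [Finset.prod_eq_zero (Finset.mem_univ i)]
    simp [hie, hmi]
  · intro j _
    congr 1
    refine Finset.prod_congr rfl fun i _ => ?_
    by_cases hie : i ∈ e
    · simp [restrictOrder, hie]
      rfl
    · have h0 : restrictOrder r e i = 0 := by simp [restrictOrder, hie]
      have hj0 : (j i : ℕ) = 0 := by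
        have := (j i).isLt
        omega
      simp [hie, restrictOrder, hj0]
      exact Fin.ext (by rw [Fin.val_zero]; exact hj0)

lemma coeff_zero {d : ℕ} {r : Fin d → ℕ} (c : ((i : Fin d) → Fin (r i + 1)) → ℝ)
    (h : ∀ x : Fin d → ℝ, ∑ m : (i : Fin d) → Fin (r i + 1), c m * ∏ i, x i ^ (m i : ℕ) = 0)
    (m : (i : Fin d) → Fin (r i + 1)) : c m = 0 := by
  classical
  set μ : ((i : Fin d) → Fin (r i + 1)) → (Fin d →₀ ℕ) :=
    fun m => Finsupp.equivFunOnFinite.symm fun i => (m i : ℕ) with hμ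
  have hμinj : Function.Injective μ := by
    intro m₁ m₂ hmm
    have hfn := Finsupp.equivFunOnFinite.symm.injective hmm
    funext i
    exact Fin.ext (congrFun hfn i)
  set P : MvPolynomial (Fin d) ℝ :=
    ∑ m : (i : Fin d) → Fin (r i + 1), MvPolynomial.monomial (μ m) (c m) with hP
  have hPval : ∀ x : Fin d → ℝ,
      MvPolynomial.eval x P = ∑ m : (i : Fin d) → Fin (r i + 1), c m * ∏ i, x i ^ (m i : ℕ) := by
    intro x
    rw [hP, map_sum]
    refine Finset.sum_congr rfl fun m' _ => ?_
    rw [MvPolynomial.eval_monomial]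
    congr 1
    rw [Finsupp.prod_fintype _ _ (fun i => pow_zero _)]
    refine Finset.prod_congr rfl fun i _ => ?_
    simp [hμ]
  have hP0 : P = 0 := MvPolynomial.funext fun x => by rw [hPval x, h x, map_zero]
  have hco : MvPolynomial.coeff (μ m) P = c m := by
    rw [hP, MvPolynomial.coeff_sum]
    rw [Finset.sum_eq_single m]
    · rw [MvPolynomial.coeff_monomial, if_pos rfl]
    · intro m' _ hne
      rw [MvPolynomial.coeff_monomial, if_neg (fun hEq => hne (hμinj hEq))]
    · simp
  rw [hP0] at hco
  simpa using hco.symm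

lemma combine {d : ℕ} (r : Fin d → ℕ) (a : ((i : Fin d) → Fin (r i + 1)) → ℝ)
    (b : Finset (Fin d) → ℝ) (F : ((i : Fin d) → Fin (r i + 1)) → ℝ) :
    ∑ m : (i : Fin d) → Fin (r i + 1),
      ((if ∃ i, (m i : ℕ) ≠ 0 then a m else 0)
        + (∑ e ∈ Finset.univ.powerset.erase (∅ : Finset (Fin d)), b e * WCoef r e m)
        - (if ∀ i, (m i : ℕ) = 0 then 1 else 0)) * F m
    = ((∑ k ∈ Finset.univ.filter (fun k : (i : Fin d) → Fin (r i + 1) => ∃ i, (k i : ℕ) ≠ 0),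
          a k * F k)
        + ∑ e ∈ Finset.univ.powerset.erase (∅ : Finset (Fin d)),
            b e * ∑ m : (i : Fin d) → Fin (r i + 1), WCoef r e m * F m)
      - F (fun _ => 0) := by
  classical
  simp only [sub_mul, add_mul, Finset.sum_sub_distrib, Finset.sum_add_distrib]
  congr 1
  congr 1
  · rw [Finset.sum_filter]
    refine Finset.sum_congr rfl fun m _ => ?_
    split <;> simp
  · simp only [Finset.sum_mul]
    rw [Finset.sum_comm]
    refine Finset.sum_congr rfl fun e _ => ?_
    rw [Finset.mul_sum]
    refine Finset.sum_congr rfl fun m _ => ?_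
    ring
  · rw [Finset.sum_eq_single (fun _ => 0 : (i : Fin d) → Fin (r i + 1))]
    · simp
    · intro m _ hne
      have hna : ¬ ∀ i, (m i : ℕ) = 0 := by
        intro hall
        apply hne
        funext i
        exact Fin.ext (by simpa using hall i)
      simp [hna]
      intro hall
      exact (hna fun i => by simp [hall i]).elim
    · simp

/-- **Difference representation formula.** If `a_k` (`0 < k ≤ r`) and `b_e` (`∅ ≠ e ⊂ [d]`)
are coefficients of the identity `1 = ∑_{0<k≤r} a_k x^k + ∑_{∅≠e⊂[d]} b_e ∏_{i∈e}(x_i−1)^{r_i}`,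
then every `f : ℝ^d → ℝ` satisfies
`f(x) = ∑_{0<k≤r} a_k f(x + kh) + ∑_{∅≠e⊂[d]} b_e Δ_h^{r(e)}(f,x)` for all `x, h`;
in particular, if `f ∈ L_p^loc(ℝ^d)` has `Δ_h^{r(e)}(f,x) = 0` for all nonempty `e` and almost
all `(x,h)`, then `f(x) = ∑_{0<k≤r} a_k f(x+kh)` for almost all `(x,h)`. -/
theorem diff_representation (d : ℕ) (r : Fin d → ℕ) (hr : ∀ i, 1 ≤ r i)
    (a : ((i : Fin d) → Fin (r i + 1)) → ℝ) (b : Finset (Fin d) → ℝ)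
    (hid : ∀ x : Fin d → ℝ,
      (1 : ℝ) =
        (∑ k ∈ Finset.univ.filter (fun k : (i : Fin d) → Fin (r i + 1) => ∃ i, (k i : ℕ) ≠ 0),
          a k * ∏ i, x i ^ (k i : ℕ)) +
        ∑ e ∈ Finset.univ.powerset.erase (∅ : Finset (Fin d)),
          b e * ∏ i ∈ e, (x i - 1) ^ (r i)) :
    (∀ (f : (Fin d → ℝ) → ℝ) (x h : Fin d → ℝ),
      f x =
        (∑ k ∈ Finset.univ.filter (fun k : (i : Fin d) → Fin (r i + 1) => ∃ i, (k i : ℕ) ≠ 0),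
          a k * f (fun i => x i + (k i : ℝ) * h i)) +
        ∑ e ∈ Finset.univ.powerset.erase (∅ : Finset (Fin d)),
          b e * mixedDiff (restrictOrder r e) h f x) ∧
    ∀ (p : ℝ≥0∞), 0 < p → ∀ f : (Fin d → ℝ) → ℝ, MemLpLoc p f →
      (∀ e ∈ Finset.univ.powerset.erase (∅ : Finset (Fin d)),
        ∀ᵐ xh : (Fin d → ℝ) × (Fin d → ℝ) ∂volume,
          mixedDiff (restrictOrder r e) xh.2 f xh.1 = 0) →
      ∀ᵐ xh : (Fin d → ℝ) × (Fin d → ℝ) ∂volume,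
        f xh.1 =
          ∑ k ∈ Finset.univ.filter (fun k : (i : Fin d) → Fin (r i + 1) => ∃ i, (k i : ℕ) ≠ 0),
            a k * f (fun i => xh.1 i + (k i : ℝ) * xh.2 i) := by
  classical
  have hc : ∀ m : (i : Fin d) → Fin (r i + 1),
      (if ∃ i, (m i : ℕ) ≠ 0 then a m else 0)
        + (∑ e ∈ Finset.univ.powerset.erase (∅ : Finset (Fin d)), b e * WCoef r e m)
        - (if ∀ i, (m i : ℕ) = 0 then 1 else 0) = 0 := by
    intro m
    refine coeff_zero (fun m => (if ∃ i, (m i : ℕ) ≠ 0 then a m else 0)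
        + (∑ e ∈ Finset.univ.powerset.erase (∅ : Finset (Fin d)), b e * WCoef r e m)
        - (if ∀ i, (m i : ℕ) = 0 then 1 else 0)) ?_ m
    intro x
    refine (combine r a b (fun m => ∏ i, x i ^ (m i : ℕ))).trans ?_
    beta_reduce
    have h2 : ∑ e ∈ Finset.univ.powerset.erase (∅ : Finset (Fin d)),
        b e * ∑ m : (i : Fin d) → Fin (r i + 1), WCoef r e m * ∏ i, x i ^ (m i : ℕ)
        = ∑ e ∈ Finset.univ.powerset.erase (∅ : Finset (Fin d)),
            b e * ∏ i ∈ e, (x i - 1) ^ (r i) :=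
      Finset.sum_congr rfl fun e _ => by rw [← prod_expand]
    rw [h2]
    have h3 : ∏ i, x i ^ (((fun _ => 0 : (i : Fin d) → Fin (r i + 1)) i : ℕ)) = 1 := by simp
    rw [h3]
    linarith [hid x]
  have part1 : ∀ (f : (Fin d → ℝ) → ℝ) (x h : Fin d → ℝ),
      f x =
        (∑ k ∈ Finset.univ.filter (fun k : (i : Fin d) → Fin (r i + 1) => ∃ i, (k i : ℕ) ≠ 0),
          a k * f (fun i => x i + (k i : ℝ) * h i)) +
        ∑ e ∈ Finset.univ.powerset.erase (∅ : Finset (Fin d)),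
          b e * mixedDiff (restrictOrder r e) h f x := by
    intro f x h
    have E0 : ∑ m : (i : Fin d) → Fin (r i + 1),
        ((if ∃ i, (m i : ℕ) ≠ 0 then a m else 0)
          + (∑ e ∈ Finset.univ.powerset.erase (∅ : Finset (Fin d)), b e * WCoef r e m)
          - (if ∀ i, (m i : ℕ) = 0 then 1 else 0))
          * (fun m : (i : Fin d) → Fin (r i + 1) => f (fun i => x i + (m i : ℝ) * h i)) m
        = 0 :=
      Finset.sum_eq_zero fun m _ => by rw [hc m, zero_mul]
    have E2 := (combine r a b (fun m => f (fun i => x i + (m i : ℝ) * h i))).symm.trans E0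
    beta_reduce at E2
    have h2 : ∑ e ∈ Finset.univ.powerset.erase (∅ : Finset (Fin d)),
        b e * ∑ m : (i : Fin d) → Fin (r i + 1),
          WCoef r e m * f (fun i => x i + (m i : ℝ) * h i)
        = ∑ e ∈ Finset.univ.powerset.erase (∅ : Finset (Fin d)),
            b e * mixedDiff (restrictOrder r e) h f x :=
      Finset.sum_congr rfl fun e _ => by rw [← mixedDiff_expand]
    rw [h2] at E2
    have h3 : f (fun i => x i + (((fun _ => 0 : (i : Fin d) → Fin (r i + 1)) i : ℕ) : ℝ) * h i)
        = f x := by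
      congr 1
      funext i
      simp
    rw [h3] at E2
    linarith
  refine ⟨part1, ?_⟩
  intro p hp f hf hz
  have H : ∀ᵐ xh : (Fin d → ℝ) × (Fin d → ℝ) ∂volume,
      ∀ e ∈ Finset.univ.powerset.erase (∅ : Finset (Fin d)),
        mixedDiff (restrictOrder r e) xh.2 f xh.1 = 0 :=
    (Filter.eventually_all_finset _).2 hz
  filter_upwards [H] with xh hxh
  rw [part1 f xh.1 xh.2]
  have hz0 : ∑ e ∈ Finset.univ.powerset.erase (∅ : Finset (Fin d)),
      b e * mixedDiff (restrictOrder r e) xh.2 f xh.1 = 0 :=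
    Finset.sum_eq_zero fun e he => by rw [hxh e he, mul_zero]
  rw [hz0, add_zero]
end

section
/- (Approximation by constants.) Let 0 < p ≤ ∞. Then there is a constant C depending only on d and p such that for every d-parallelepiped Q and every f ∈ L_p(Q), there exists a constant β ∈ ℝ such that ‖f − β‖_{p,Q} ≤ C · Ω_𝟏(f, δ(Q))_{p,Q}, where 𝟏 = (1,…,1) ∈ ℕ^d and δ(Q) is the size of Q. -/
open MeasureTheory ENNReal NNReal Finset

namespace ApproxConstAux

variable {d : ℕ}

noncomputable abbrev nu (a b : Fin d → ℝ) : Fin d → Measure ℝ :=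
  fun k => volume.restrict (Set.Icc (a k) (b k))




theorem updateFinset_overwrite {s t : Finset (Fin d)} (hst : Disjoint s t)
    (x : Fin d → ℝ) (v : (k : s) → ℝ) (z : (k : t) → ℝ) (w : (k : s) → ℝ) :
    Function.updateFinset (Function.updateFinset (Function.updateFinset x s v) t z) s w
      = Function.updateFinset (Function.updateFinset x t z) s w := by
  funext k
  by_cases hks : k ∈ s <;> by_cases hkt : k ∈ t
  · exact absurd hkt (Finset.disjoint_left.mp hst hks)
  · simp [Function.updateFinset, hks, hkt]
  · simp [Function.updateFinset, hks, hkt]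
  · simp [Function.updateFinset, hks, hkt]

theorem updateFinset_comm {s t : Finset (Fin d)} (hst : Disjoint s t)
    (x : Fin d → ℝ) (v : (k : s) → ℝ) (z : (k : t) → ℝ) :
    Function.updateFinset (Function.updateFinset x s v) t z
      = Function.updateFinset (Function.updateFinset x t z) s v := by
  funext k
  by_cases hks : k ∈ s <;> by_cases hkt : k ∈ t
  · exact absurd hkt (Finset.disjoint_left.mp hst hks)
  · simp [Function.updateFinset, hks, hkt]
  · simp [Function.updateFinset, hks, hkt]
  · simp [Function.updateFinset, hks, hkt]

theorem updateFinset_absorb {t u : Finset (Fin d)} (htu : t ⊆ u)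
    (x : Fin d → ℝ) (v : (k : t) → ℝ) (z : (k : u) → ℝ) :
    Function.updateFinset (Function.updateFinset x t v) u z = Function.updateFinset x u z := by
  funext k
  by_cases hku : k ∈ u <;> by_cases hkt : k ∈ t
  · simp [Function.updateFinset, hku, hkt]
  · simp [Function.updateFinset, hku, hkt]
  · exact absurd (htu hkt) hku
  · simp [Function.updateFinset, hku, hkt]

theorem updateFinset_self_of {s t : Finset (Fin d)} (hst : Disjoint s t)
    (x : Fin d → ℝ) (z : (k : t) → ℝ) :
    Function.updateFinset (Function.updateFinset x t z) s (fun k : s => x k)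
      = Function.updateFinset x t z := by
  funext k
  by_cases hks : k ∈ s <;> by_cases hkt : k ∈ t
  · exact absurd hkt (Finset.disjoint_left.mp hst hks)
  · simp [Function.updateFinset, hks, hkt]
  · simp [Function.updateFinset, hks, hkt]
  · simp [Function.updateFinset, hks, hkt]

theorem measurable_updateFinset2 {s : Finset (Fin d)} :
    Measurable (fun p : (Fin d → ℝ) × ((k : s) → ℝ) => Function.updateFinset p.1 s p.2) := by
  apply measurable_pi_lambda
  intro k
  by_cases hk : k ∈ s
  · simpa [Function.updateFinset, hk, Function.comp_def] using ((measurable_pi_apply (⟨k, hk⟩ : s)).comp measurable_snd)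
  · simpa [Function.updateFinset, hk, Function.comp_def] using ((measurable_pi_apply k).comp measurable_fst)

theorem lmarginal_indep {ν : Fin d → Measure ℝ} [∀ k, SigmaFinite (ν k)] {s : Finset (Fin d)}
    {ψ : (Fin d → ℝ) → ℝ≥0∞} (hψ : ∀ x v, ψ (Function.updateFinset x s v) = ψ x)
    (x : Fin d → ℝ) :
    (∫⋯∫⁻_s, ψ ∂ν) x = (∏ k ∈ s, ν k Set.univ) * ψ x := by
  rw [lmarginal]
  simp_rw [hψ]
  rw [lintegral_const, Measure.pi_univ, mul_comm]
  congr 1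
  exact Finset.prod_coe_sort s fun k => ν k Set.univ




theorem measurableSet_box (a b : Fin d → ℝ) : MeasurableSet (box a b) :=
  MeasurableSet.univ_pi fun _ => measurableSet_Icc

theorem measurableSet_boxShift (a b y : Fin d → ℝ) : MeasurableSet (boxShift a b y) := by
  have : boxShift a b y = ⋂ i : Fin d,
      ((fun x : Fin d → ℝ => x i) ⁻¹' Set.Icc (a i) (b i) ∩
       (fun x : Fin d → ℝ => x i + y i) ⁻¹' Set.Icc (a i) (b i)) := by
    ext x; simp [boxShift, Set.mem_iInter]
  rw [this]
  exact MeasurableSet.iInter fun i =>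
    ((measurable_pi_apply i) measurableSet_Icc).inter
      ((by fun_prop : Measurable fun x : Fin d → ℝ => x i + y i) measurableSet_Icc)

theorem restrict_box_eq (a b : Fin d → ℝ) :
    volume.restrict (box a b) = Measure.pi (nu a b) := by
  refine (Measure.pi_eq fun s hs => ?_).symm
  rw [Measure.restrict_apply' (measurableSet_box a b)]
  have : Set.univ.pi s ∩ box a b = Set.univ.pi (fun k => s k ∩ Set.Icc (a k) (b k)) := by
    unfold _root_.box
    ext x
    simp only [Set.mem_inter_iff, Set.mem_pi, Set.mem_univ, true_implies, Set.mem_inter_iff]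
    constructor
    · rintro ⟨hx1, hx2⟩ k
      exact ⟨hx1 k, hx2 k⟩
    · intro hx
      exact ⟨fun k => (hx k).1, fun k => (hx k).2⟩
  rw [this, volume_pi_pi]
  exact Finset.prod_congr rfl fun k _ => (Measure.restrict_apply (hs k)).symm

theorem boxShift_single_eq (a b : Fin d → ℝ) (i : Fin d) (h : ℝ) :
    {w : Fin d → ℝ | w i + h ∈ Set.Icc (a i) (b i)} ∩ box a b
      = boxShift a b (fun k => if k = i then h else 0) := by
  unfold boxShift _root_.box
  ext z
  simp only [Set.mem_inter_iff, Set.mem_setOf_eq, Set.mem_pi, Set.mem_univ, true_implies]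
  constructor
  · rintro ⟨h1, h2⟩ k
    refine ⟨h2 k, ?_⟩
    by_cases hk : k = i
    · subst hk; simpa using h1
    · simpa [hk] using h2 k
  · intro hz
    exact ⟨by simpa using (hz i).2, fun k => (hz k).1⟩

theorem boxShift_single_empty (a b : Fin d → ℝ) (i : Fin d) (h : ℝ)
    (hh : ¬ |h| ≤ b i - a i) :
    boxShift a b (fun k => if k = i then h else 0) = ∅ := by
  rw [Set.eq_empty_iff_forall_notMem]
  intro z hz
  obtain ⟨hz1, hz2⟩ := hz i
  have hz2' : z i + h ∈ Set.Icc (a i) (b i) := by simpa using hz2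
  rw [Set.mem_Icc] at hz1 hz2' 
  exact hh (abs_le.mpr ⟨by linarith [hz1.2, hz2'.1], by linarith [hz1.1, hz2'.2]⟩)

theorem sub_chain (a b : Fin d → ℝ) (i : Fin d) (H : (Fin d → ℝ) → ℝ → ℝ≥0∞)
    (hH : Measurable (Function.uncurry H)) :
    ∫⁻ t, ∫⁻ z, H z t ∂Measure.pi (nu a b) ∂(nu a b i)
      = ∫⁻ h, ∫⁻ z, H z (z i + h)
          ∂(volume.restrict (boxShift a b (fun k => if k = i then h else 0))) ∂volume := by
  have hswap1 : ∫⁻ t, ∫⁻ z, H z t ∂Measure.pi (nu a b) ∂(nu a b i)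
      = ∫⁻ z, ∫⁻ t, H z t ∂(nu a b i) ∂Measure.pi (nu a b) := by
    apply lintegral_lintegral_swap
    exact (hH.comp measurable_swap).aemeasurable
  rw [hswap1]
  have h2 : ∀ z : Fin d → ℝ, ∫⁻ t, H z t ∂(nu a b i)
      = ∫⁻ h, (Set.Icc (a i) (b i)).indicator (fun t => H z t) (z i + h) ∂volume := by
    intro z
    rw [show (nu a b i) = volume.restrict (Set.Icc (a i) (b i)) from rfl,
      ← lintegral_indicator measurableSet_Icc]
    exact (lintegral_add_left_eq_self
      (fun t => (Set.Icc (a i) (b i)).indicator (fun t => H z t) t) (z i)).symm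
  simp_rw [h2]
  have hmeas2 : Measurable (Function.uncurry fun (z : Fin d → ℝ) (h : ℝ) =>
      (Set.Icc (a i) (b i)).indicator (fun t => H z t) (z i + h)) := by
    have m1 : Measurable fun p : (Fin d → ℝ) × ℝ => p.1 i + p.2 :=
      ((measurable_pi_apply i).comp measurable_fst).add measurable_snd
    have m2 : Measurable fun p : (Fin d → ℝ) × ℝ => H p.1 (p.1 i + p.2) :=
      hH.comp (measurable_fst.prodMk m1)
    have : (Function.uncurry fun (z : Fin d → ℝ) (h : ℝ) =>
        (Set.Icc (a i) (b i)).indicator (fun t => H z t) (z i + h))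
        = fun p : (Fin d → ℝ) × ℝ =>
            if p.1 i + p.2 ∈ Set.Icc (a i) (b i) then H p.1 (p.1 i + p.2) else 0 := by
      funext p
      simp [Function.uncurry, Set.indicator_apply]
    rw [this]
    exact Measurable.ite (m1 measurableSet_Icc) m2 measurable_const
  rw [lintegral_lintegral_swap hmeas2.aemeasurable]
  apply lintegral_congr
  intro h
  have e1 : ∀ z : Fin d → ℝ, (Set.Icc (a i) (b i)).indicator (fun t => H z t) (z i + h)
      = Set.indicator {w : Fin d → ℝ | w i + h ∈ Set.Icc (a i) (b i)}
          (fun w => H w (w i + h)) z := by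
    intro z
    by_cases hz : z i + h ∈ Set.Icc (a i) (b i)
    · rw [Set.indicator_of_mem hz, Set.indicator_of_mem (by exact hz)]
    · rw [Set.indicator_of_notMem hz, Set.indicator_of_notMem (by exact hz)]
  simp_rw [e1]
  have hms : MeasurableSet {w : Fin d → ℝ | w i + h ∈ Set.Icc (a i) (b i)} := by
    have : {w : Fin d → ℝ | w i + h ∈ Set.Icc (a i) (b i)}
        = (fun w : Fin d → ℝ => w i + h) ⁻¹' Set.Icc (a i) (b i) := rfl
    rw [this]
    exact ((measurable_pi_apply i : Measurable fun w : Fin d → ℝ => w i).add_const h)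
      measurableSet_Icc
  rw [lintegral_indicator hms, ← restrict_box_eq a b, Measure.restrict_restrict hms,
    boxShift_single_eq]




theorem mixedDiff_single (i : Fin d) (h : ℝ) (g : (Fin d → ℝ) → ℝ) (z : Fin d → ℝ) :
    mixedDiff (restrictOrder (fun _ => 1) {i}) (fun k => if k = i then h else 0) g z
      = g (Function.update z i (z i + h)) - g z := by
  classical
  set r : Fin d → ℕ := restrictOrder (fun _ => 1) ({i} : Finset (Fin d)) with hr
  have hri : r i = 1 := by simp [hr, restrictOrder]
  have hrk : ∀ k, k ≠ i → r k = 0 := by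
    intro k hk; simp [hr, restrictOrder, hk]
  let E : ((k : Fin d) → Fin (r k + 1)) ≃ Fin (r i + 1) :=
  { toFun := fun j => j i
    invFun := fun t k => ⟨if k = i then min (t : ℕ) (r k) else 0, by
      split
      · exact Nat.lt_succ_of_le (min_le_right _ _)
      · exact Nat.succ_pos _⟩
    left_inv := fun j => by
      funext k
      apply Fin.ext
      by_cases hk : k = i
      · subst hk
        simpa using min_eq_left (Nat.lt_succ_iff.mp (j k).isLt)
      · have h1 := (j k).isLt
        have h2 := hrk k hk
        simp only [if_neg hk]
        omega
    right_inv := fun t => by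
      apply Fin.ext
      show (if i = i then min (t : ℕ) (r i) else 0) = (t : ℕ)
      rw [if_pos rfl]
      exact min_eq_left (Nat.lt_succ_iff.mp t.isLt) }
  rw [mixedDiff, ← Equiv.sum_comp E.symm]
  have hval : ∀ (t : Fin (r i + 1)) (k : Fin d),
      ((E.symm t) k : ℕ) = if k = i then min (t : ℕ) (r k) else 0 := by
    intro t k; rfl
  have hsummand : ∀ t : Fin (r i + 1),
      (∏ k, (-1 : ℝ) ^ (r k - ((E.symm t) k : ℕ)) * ((r k).choose ((E.symm t) k) : ℝ)) *
        g (fun k => z k + (((E.symm t) k : ℕ) : ℝ) * (if k = i then h else 0))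
      = ((-1 : ℝ) ^ (r i - min ((t : ℕ)) (r i)) * ((r i).choose (min ((t : ℕ)) (r i)) : ℝ)) *
        g (fun k => if k = i then z i + ((min (t : ℕ) (r i) : ℕ) : ℝ) * h else z k) := by
    intro t
    congr 1
    · rw [Finset.prod_eq_single i]
      · rw [hval]; simp
      · intro k _ hk
        rw [hval, if_neg hk, hrk k hk]
        simp
      · intro hi; exact absurd (Finset.mem_univ i) hi
    · congr 1
      funext k
      rw [hval]
      by_cases hk : k = i
      · subst hk; simp
      · simp [hk]
  rw [Finset.sum_congr rfl fun t _ => hsummand t]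
  rw [Fin.sum_univ_eq_sum_range (fun n => ((-1 : ℝ) ^ (r i - min n (r i)) *
    ((r i).choose (min n (r i)) : ℝ)) *
    g (fun k => if k = i then z i + ((min n (r i) : ℕ) : ℝ) * h else z k)) (r i + 1)]
  rw [hri]
  rw [Finset.sum_range_succ, Finset.sum_range_succ, Finset.sum_range_zero]
  have e0 : (fun k => if k = i then z i + ((min 0 1 : ℕ) : ℝ) * h else z k) = z := by
    funext k
    by_cases hk : k = i
    · subst hk; simp
    · simp [hk]
  have e1 : (fun k => if k = i then z i + ((min 1 1 : ℕ) : ℝ) * h else z k)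
      = Function.update z i (z i + h) := by
    funext k
    by_cases hk : k = i
    · subst hk; simp
    · simp [Function.update_apply, hk]
  rw [e0, e1]
  norm_num
  ring

theorem cut_succ (x y : Fin d → ℝ) (i : Fin d) :
    Function.update (fun k : Fin d => if (k : ℕ) < (i : ℕ) then y k else x k) i (y i)
      = fun k : Fin d => if (k : ℕ) < (i : ℕ) + 1 then y k else x k := by
  funext k
  rw [Function.update_apply]
  by_cases hk : k = i
  · subst hk; simp
  · have hki : (k : ℕ) ≠ (i : ℕ) := fun hc => hk (Fin.ext hc)
    rw [if_neg hk]
    by_cases hk2 : (k : ℕ) < (i : ℕ)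
    · rw [if_pos hk2, if_pos (by omega)]
    · rw [if_neg hk2, if_neg (by omega)]

theorem telescope (g : (Fin d → ℝ) → ℝ) (x y : Fin d → ℝ) :
    g x - g y = ∑ i : Fin d,
      (g (fun k => if (k : ℕ) < (i : ℕ) then y k else x k)
        - g (fun k => if (k : ℕ) < (i : ℕ) + 1 then y k else x k)) := by
  have := Fin.sum_univ_eq_sum_range (fun n =>
    g (fun k : Fin d => if (k : ℕ) < n then y k else x k)
      - g (fun k : Fin d => if (k : ℕ) < n + 1 then y k else x k)) d
  rw [this, Finset.sum_range_sub' (fun n => g (fun k : Fin d => if (k : ℕ) < n then y k else x k)) d]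
  have e0 : (fun k : Fin d => if (k : ℕ) < 0 then y k else x k) = x := by
    funext k; simp
  have ed : (fun k : Fin d => if (k : ℕ) < d then y k else x k) = y := by
    funext k; simp [k.isLt]
  rw [e0, ed]

theorem rpow_sum_le {q : ℝ} (hq : 0 < q) (c : Fin d → ℝ≥0∞) :
    (∑ i, c i) ^ q ≤ (d : ℝ≥0∞) ^ q * ∑ i, c i ^ q := by
  rcases isEmpty_or_nonempty (Fin d) with hd | hd
  · simp [ENNReal.zero_rpow_of_pos hq]
  have h1 : ∑ i, c i ≤ (d : ℝ≥0∞) * Finset.univ.sup c := by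
    calc ∑ i, c i ≤ ∑ _i : Fin d, Finset.univ.sup c :=
          Finset.sum_le_sum (fun k _ => Finset.le_sup (f := c) (Finset.mem_univ k))
      _ = (d : ℝ≥0∞) * Finset.univ.sup c := by
          rw [Finset.sum_const, Finset.card_univ, Fintype.card_fin, nsmul_eq_mul]
  calc (∑ i, c i) ^ q ≤ ((d : ℝ≥0∞) * Finset.univ.sup c) ^ q :=
        ENNReal.rpow_le_rpow h1 hq.le
    _ = (d : ℝ≥0∞) ^ q * (Finset.univ.sup c) ^ q := ENNReal.mul_rpow_of_nonneg _ _ hq.le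
    _ ≤ (d : ℝ≥0∞) ^ q * ∑ i, c i ^ q := by
        apply mul_le_mul_right
        obtain ⟨i0, _, hi0⟩ := Finset.exists_mem_eq_sup Finset.univ
          (Finset.univ_nonempty (α := Fin d)) c
        rw [hi0]
        exact Finset.single_le_sum (f := fun k => c k ^ q) (fun k _ => zero_le) (Finset.mem_univ i0)




theorem pNorm_le_modulus {p : ℝ≥0∞} {r : Fin d → ℕ} {f : (Fin d → ℝ) → ℝ}
    {a b t : Fin d → ℝ} (h : Fin d → ℝ) (hh : ∀ i, |h i| ≤ t i) :
    pNorm p (mixedDiff r h f) (boxShift a b fun i => (r i : ℝ) * h i)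
      ≤ modulus p r f a b t :=
  le_iSup₂ (f := fun h' (_ : h' ∈ {h : Fin d → ℝ | ∀ i, |h i| ≤ t i}) =>
    pNorm p (mixedDiff r h' f) (boxShift a b fun i => (r i : ℝ) * h' i)) h hh

theorem sum_singleton_le (p : ℝ≥0∞) (f : (Fin d → ℝ) → ℝ) (a b t : Fin d → ℝ) :
    ∑ i : Fin d, modulus p (restrictOrder (fun _ => 1) {i}) f a b t
      ≤ totalModulus p (fun _ => 1) f a b t := by
  rw [totalModulus]
  calc ∑ i : Fin d, modulus p (restrictOrder (fun _ => 1) {i}) f a b t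
      = ∑ e ∈ Finset.univ.image (fun i : Fin d => ({i} : Finset (Fin d))),
          modulus p (restrictOrder (fun _ => 1) e) f a b t := by
        rw [Finset.sum_image (fun i _ j _ hij => Finset.singleton_injective hij)]
    _ ≤ ∑ e ∈ Finset.univ.powerset.erase ∅, modulus p (restrictOrder (fun _ => 1) e) f a b t := by
        apply Finset.sum_le_sum_of_subset
        intro e he
        rw [Finset.mem_image] at he
        obtain ⟨i, _, rfl⟩ := he
        rw [Finset.mem_erase]
        exact ⟨Finset.singleton_ne_empty i, Finset.mem_powerset.mpr (Finset.subset_univ _)⟩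

theorem single_mem {a b : Fin d → ℝ} (hab : ∀ k, a k ≤ b k) (i : Fin d) (h : ℝ)
    (hh : |h| ≤ b i - a i) :
    ∀ k, |(if k = i then h else 0 : ℝ)| ≤ b k - a k := by
  intro k
  by_cases hk : k = i
  · subst hk; simpa using hh
  · simp only [if_neg hk, abs_zero]
    exact sub_nonneg.mpr (hab k)

theorem single_mul (i : Fin d) (h : ℝ) :
    (fun k => ((restrictOrder (fun _ => 1) ({i} : Finset (Fin d)) k : ℕ) : ℝ) *
      (if k = i then h else 0)) = fun k => if k = i then h else 0 := by
  funext k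
  by_cases hk : k = i
  · subst hk; simp [restrictOrder]
  · simp [restrictOrder, hk]

theorem mixedDiff_congr_ae {f g : (Fin d → ℝ) → ℝ} {a b : Fin d → ℝ}
    (hfg : f =ᵐ[volume.restrict (box a b)] g) (r : Fin d → ℕ) (hr : ∀ k, r k ≤ 1)
    (h : Fin d → ℝ) :
    mixedDiff r h f =ᵐ[volume.restrict (boxShift a b fun k => (r k : ℝ) * h k)]
      mixedDiff r h g := by
  have hbox := measurableSet_box a b
  have hS := measurableSet_boxShift a b (fun k => (r k : ℝ) * h k)
  have hA : volume ({x : Fin d → ℝ | ¬ f x = g x} ∩ box a b) = 0 := by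
    rw [Filter.EventuallyEq, ae_iff] at hfg
    rwa [Measure.restrict_apply' hbox] at hfg
  have key : ∀ j : (k : Fin d) → Fin (r k + 1),
      (fun x : Fin d → ℝ => f (fun k => x k + (j k : ℝ) * h k))
        =ᵐ[volume.restrict (boxShift a b fun k => (r k : ℝ) * h k)]
      (fun x : Fin d → ℝ => g (fun k => x k + (j k : ℝ) * h k)) := by
    intro j
    have hsub : {x : Fin d → ℝ |
          ¬ f (fun k => x k + (j k : ℝ) * h k) = g (fun k => x k + (j k : ℝ) * h k)}
          ∩ boxShift a b (fun k => (r k : ℝ) * h k)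
        ⊆ (fun x : Fin d → ℝ => x + fun k => (j k : ℝ) * h k) ⁻¹'
            ({x : Fin d → ℝ | ¬ f x = g x} ∩ box a b) := by
      rintro x ⟨hx1, hx2⟩
      refine ⟨hx1, ?_⟩
      intro k _
      obtain ⟨hk1, hk2⟩ := hx2 k
      show x k + (j k : ℝ) * h k ∈ Set.Icc (a k) (b k)
      have hjk : (j k : ℕ) = 0 ∨ (j k : ℕ) = r k := by
        have h1 := (j k).isLt
        have h2 := hr k
        omega
      rcases hjk with hjk | hjk
      · rw [hjk]; simpa using hk1
      · rw [hjk]; exact hk2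
    rw [Filter.EventuallyEq, ae_iff, Measure.restrict_apply' hS]
    refine measure_mono_null hsub ?_
    rw [measure_preimage_add_right]
    exact hA
  have hall := ae_all_iff.mpr key
  refine hall.mono fun x hx => ?_
  show mixedDiff r h f x = mixedDiff r h g x
  rw [mixedDiff, mixedDiff]
  refine Finset.sum_congr rfl fun j _ => ?_
  have hxj : (f fun i => x i + ((j i : ℕ) : ℝ) * h i) = g fun i => x i + ((j i : ℕ) : ℝ) * h i :=
    hx j
  rw [hxj]

theorem modulus_congr_ae {f g : (Fin d → ℝ) → ℝ} {a b : Fin d → ℝ} (p : ℝ≥0∞)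
    (t : Fin d → ℝ) (hfg : f =ᵐ[volume.restrict (box a b)] g)
    (r : Fin d → ℕ) (hr : ∀ k, r k ≤ 1) :
    modulus p r f a b t = modulus p r g a b t := by
  rw [modulus, modulus]
  refine iSup_congr fun h => iSup_congr fun _ => ?_
  exact eLpNorm_congr_ae (mixedDiff_congr_ae hfg r hr h)

theorem totalModulus_congr_ae {f g : (Fin d → ℝ) → ℝ} {a b : Fin d → ℝ} (p : ℝ≥0∞)
    (t : Fin d → ℝ) (hfg : f =ᵐ[volume.restrict (box a b)] g) :
    totalModulus p (fun _ => 1) f a b t = totalModulus p (fun _ => 1) g a b t := by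
  rw [totalModulus, totalModulus]
  refine Finset.sum_congr rfl fun e _ => ?_
  refine modulus_congr_ae p t hfg _ fun k => ?_
  rw [restrictOrder]
  split <;> omega




theorem measurable_updateFinset1 {s : Finset (Fin d)} (c : (k : s) → ℝ) :
    Measurable (fun x : Fin d → ℝ => Function.updateFinset x s c) := by
  apply measurable_pi_lambda
  intro k
  by_cases hk : k ∈ s
  · simpa [Function.updateFinset, hk] using (measurable_const : Measurable fun _ : Fin d → ℝ => c ⟨k, hk⟩)
  · simpa [Function.updateFinset, hk] using (measurable_pi_apply k)
theorem core (a b : Fin d → ℝ) (i : Fin d) (H : (Fin d → ℝ) → ℝ → ℝ≥0∞)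
    (hH : Measurable (Function.uncurry H)) :
    ∫⁻ y, ∫⁻ x, H (fun k => if (k : ℕ) < (i : ℕ) then y k else x k) (y i)
        ∂Measure.pi (nu a b) ∂Measure.pi (nu a b)
      = ((∏ k ∈ univ.filter (fun k : Fin d => (k : ℕ) < (i : ℕ)), nu a b k Set.univ) *
         ∏ k ∈ univ.filter (fun k : Fin d => (i : ℕ) < (k : ℕ)), nu a b k Set.univ) *
          ∫⁻ t, ∫⁻ z, H z t ∂Measure.pi (nu a b) ∂(nu a b i) := by
  classical
  set ν := nu a b with hν
  set S : Finset (Fin d) := univ.filter (fun k : Fin d => (k : ℕ) < (i : ℕ)) with hS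
  set U : Finset (Fin d) := univ.filter (fun k : Fin d => ¬ (k : ℕ) < (i : ℕ)) with hU
  set W : Finset (Fin d) := univ.filter (fun k : Fin d => (i : ℕ) < (k : ℕ)) with hW
  set V : Finset (Fin d) := univ.filter (fun k : Fin d => ¬ (i : ℕ) < (k : ℕ)) with hV
  have hSU : Disjoint S U := by
    rw [Finset.disjoint_left]; intro k hk1 hk2
    rw [hS, Finset.mem_filter] at hk1; rw [hU, Finset.mem_filter] at hk2
    exact hk2.2 hk1.2
  have hSUuniv : S ∪ U = univ := by
    ext k; simp only [hS, hU, Finset.mem_union, Finset.mem_filter, Finset.mem_univ, true_and]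
    constructor
    · intro _; trivial
    · intro _; tauto
  have hWV : Disjoint W V := by
    rw [Finset.disjoint_left]; intro k hk1 hk2
    rw [hW, Finset.mem_filter] at hk1; rw [hV, Finset.mem_filter] at hk2
    exact hk2.2 hk1.2
  have hWVuniv : W ∪ V = univ := by
    ext k; simp only [hW, hV, Finset.mem_union, Finset.mem_filter, Finset.mem_univ, true_and]
    constructor
    · intro _; trivial
    · intro _; tauto
  have hiS : i ∉ S := by rw [hS, Finset.mem_filter]; simp
  have hiW : i ∉ W := by rw [hW, Finset.mem_filter]; simp
  have hWU : W ⊆ U := by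
    intro k hk; rw [hW, Finset.mem_filter] at hk; rw [hU, Finset.mem_filter]
    exact ⟨hk.1, by omega⟩
  have hiV : ({i} : Finset (Fin d)) ∪ S = V := by
    ext k
    simp only [hV, Finset.mem_union, Finset.mem_singleton, hS, Finset.mem_filter,
      Finset.mem_univ, true_and]
    rw [Fin.ext_iff]
    omega
  have hiSdisj : Disjoint ({i} : Finset (Fin d)) S := by
    rw [Finset.disjoint_left]; intro k hk1 hk2
    rw [Finset.mem_singleton] at hk1; subst hk1; exact hiS hk2
  -- measurability helpers
  have hH1 : ∀ c : ℝ, Measurable (fun z : Fin d → ℝ => H z c) := fun c =>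
    hH.comp (measurable_id.prodMk measurable_const)
  have hg : ∀ y : Fin d → ℝ,
      Measurable (fun x : Fin d → ℝ =>
        H (Function.updateFinset x S (fun k : S => y k)) (y i)) := by
    intro y
    exact (hH1 (y i)).comp' (measurable_updateFinset1 _)
  have hFmeas : Measurable (fun y : Fin d → ℝ =>
      ∫⁻ z : (k : U) → ℝ, H (Function.updateFinset y U z) (y i)
        ∂Measure.pi (fun k : U => ν k)) := by
    apply Measurable.lintegral_prod_right'
      (f := fun p : (Fin d → ℝ) × ((k : U) → ℝ) => H (Function.updateFinset p.1 U p.2) (p.1 i))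
    exact hH.comp (measurable_updateFinset2.prodMk ((measurable_pi_apply i).comp measurable_fst))
  -- Step 1 : inner integral
  have step1 : ∀ y : Fin d → ℝ,
      (∫⁻ x, H (fun k => if (k : ℕ) < (i : ℕ) then y k else x k) (y i) ∂Measure.pi ν)
        = (∏ k ∈ S, ν k Set.univ) *
            ∫⁻ z : (k : U) → ℝ, H (Function.updateFinset y U z) (y i)
              ∂Measure.pi (fun k : U => ν k) := by
    intro y
    have hux : ∀ x : Fin d → ℝ, (fun k : Fin d => if (k : ℕ) < (i : ℕ) then y k else x k)
        = Function.updateFinset x S (fun k : S => y k) := by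
      intro x; funext k
      by_cases hk : (k : ℕ) < (i : ℕ)
      · have hkS : k ∈ S := by rw [hS, Finset.mem_filter]; exact ⟨Finset.mem_univ _, hk⟩
        simp [Function.updateFinset, hkS, hk]
      · have hkS : k ∉ S := by rw [hS, Finset.mem_filter]; tauto
        simp [Function.updateFinset, hkS, hk]
    simp_rw [hux]
    rw [lintegral_eq_lmarginal_univ y, ← hSUuniv,
      lmarginal_union ν _ (hg y) hSU]
    have hψ : ∀ w v, (∫⋯∫⁻_U, (fun x => H (Function.updateFinset x S (fun k : S => y k)) (y i)) ∂ν)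
        (Function.updateFinset w S v)
        = (∫⋯∫⁻_U, (fun x => H (Function.updateFinset x S (fun k : S => y k)) (y i)) ∂ν) w := by
      intro w v
      rw [lmarginal, lmarginal]
      apply lintegral_congr; intro z
      rw [updateFinset_overwrite hSU w v z]
    rw [lmarginal_indep hψ y]
    congr 1
    rw [lmarginal]
    apply lintegral_congr; intro z
    rw [updateFinset_self_of hSU y z]
  simp_rw [step1]
  rw [lintegral_const_mul _ hFmeas, mul_assoc]
  congr 1
  -- Step 3 : outer integral
  have hFindep : ∀ (w : Fin d → ℝ) (v : (k : W) → ℝ),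
      (∫⁻ z : (k : U) → ℝ, H (Function.updateFinset (Function.updateFinset w W v) U z)
          ((Function.updateFinset w W v) i) ∂Measure.pi (fun k : U => ν k))
        = ∫⁻ z : (k : U) → ℝ, H (Function.updateFinset w U z) (w i)
            ∂Measure.pi (fun k : U => ν k) := by
    intro w v
    have h2 : (Function.updateFinset w W v) i = w i := by
      simp [Function.updateFinset, hiW]
    apply lintegral_congr; intro z
    rw [updateFinset_absorb hWU, h2]
  rw [lintegral_eq_lmarginal_univ a, ← hWVuniv, lmarginal_union ν _ hFmeas hWV]
  have hψ2 : ∀ w v, (∫⋯∫⁻_V, (fun y => ∫⁻ z : (k : U) → ℝ,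
        H (Function.updateFinset y U z) (y i) ∂Measure.pi (fun k : U => ν k)) ∂ν)
        (Function.updateFinset w W v)
      = (∫⋯∫⁻_V, (fun y => ∫⁻ z : (k : U) → ℝ,
        H (Function.updateFinset y U z) (y i) ∂Measure.pi (fun k : U => ν k)) ∂ν) w := by
    intro w v
    rw [lmarginal, lmarginal]
    apply lintegral_congr; intro z
    rw [updateFinset_comm hWV w v z]
    exact hFindep _ _
  rw [lmarginal_indep hψ2 a]
  congr 1
  -- remaining : (∫⋯∫⁻_V, F ∂ν) a = ∫⁻ t, ∫⁻ z, H z t ∂pi ν ∂ν i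
  rw [← hiV, lmarginal_union ν _ hFmeas hiSdisj, lmarginal_singleton]
  have hclaim : ∀ w : Fin d → ℝ,
      (∫⋯∫⁻_S, (fun y => ∫⁻ z : (k : U) → ℝ,
          H (Function.updateFinset y U z) (y i) ∂Measure.pi (fun k : U => ν k)) ∂ν) w
        = ∫⁻ z, H z (w i) ∂Measure.pi ν := by
    intro w
    rw [lintegral_eq_lmarginal_univ w, ← hSUuniv, lmarginal_union ν _ (hH1 (w i)) hSU]
    rw [lmarginal, lmarginal]
    apply lintegral_congr; intro v
    rw [lmarginal]
    apply lintegral_congr; intro z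
    congr 1
    simp [Function.updateFinset, hiS]
  simp_rw [hclaim]
  apply lintegral_congr; intro t
  simp



theorem prod_split (i : Fin d) (m : Fin d → ℝ≥0∞) :
    (∏ k ∈ univ.filter (fun k : Fin d => (k : ℕ) < (i : ℕ)), m k) *
    (∏ k ∈ univ.filter (fun k : Fin d => (i : ℕ) < (k : ℕ)), m k) * m i = ∏ k, m k := by
  classical
  have h2 : Disjoint (univ.filter (fun k : Fin d => (k : ℕ) < (i : ℕ)))
      (univ.filter (fun k : Fin d => (i : ℕ) < (k : ℕ))) := by
    rw [Finset.disjoint_left]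
    intro k hk1 hk2
    rw [Finset.mem_filter] at hk1 hk2
    omega
  have h1 : Disjoint ((univ.filter (fun k : Fin d => (k : ℕ) < (i : ℕ))) ∪
      (univ.filter (fun k : Fin d => (i : ℕ) < (k : ℕ)))) ({i} : Finset (Fin d)) := by
    rw [Finset.disjoint_right]
    intro k hk1 hk2
    rw [Finset.mem_singleton] at hk1
    subst hk1
    rw [Finset.mem_union, Finset.mem_filter, Finset.mem_filter] at hk2
    omega
  have h3 : ((univ.filter (fun k : Fin d => (k : ℕ) < (i : ℕ))) ∪
      (univ.filter (fun k : Fin d => (i : ℕ) < (k : ℕ)))) ∪ ({i} : Finset (Fin d)) = univ := by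
    ext k
    simp only [Finset.mem_union, Finset.mem_filter, Finset.mem_univ, true_and,
      Finset.mem_singleton, iff_true]
    rw [Fin.ext_iff]
    omega
  rw [← Finset.prod_singleton (f := m) (a := i), ← Finset.prod_union h2, ← Finset.prod_union h1,
    h3]

theorem measurable_update2 (i : Fin d) :
    Measurable (fun p : (Fin d → ℝ) × ℝ => Function.update p.1 i p.2) := by
  apply measurable_pi_lambda
  intro k
  by_cases hk : k = i
  · subst hk
    simp only [Function.update_self]
    exact measurable_snd
  · simp only [Function.update_of_ne hk]
    exact (measurable_pi_apply k).comp measurable_fst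

theorem measurable_Hq (g : (Fin d → ℝ) → ℝ) (hg : Measurable g) (i : Fin d) (q : ℝ) :
    Measurable (Function.uncurry fun (z : Fin d → ℝ) (t : ℝ) =>
      (‖g z - g (Function.update z i t)‖₊ : ℝ≥0∞) ^ q) := by
  have h1 : Measurable fun p : (Fin d → ℝ) × ℝ => g p.1 - g (Function.update p.1 i p.2) :=
    (hg.comp measurable_fst).sub (hg.comp (measurable_update2 i))
  exact (h1.nnnorm.coe_nnreal_ennreal).pow measurable_const

theorem measurable_cutp (i : Fin d) :
    Measurable (fun p : (Fin d → ℝ) × (Fin d → ℝ) =>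
      (fun k : Fin d => if (k : ℕ) < (i : ℕ) then p.1 k else p.2 k)) := by
  apply measurable_pi_lambda
  intro k
  by_cases hk : (k : ℕ) < (i : ℕ)
  · simp only [if_pos hk]
    exact (measurable_pi_apply k).comp measurable_fst
  · simp only [if_neg hk]
    exact (measurable_pi_apply k).comp measurable_snd

theorem bound_after_sub (a b : Fin d → ℝ) (i : Fin d)
    (H : (Fin d → ℝ) → ℝ → ℝ≥0∞) (hH : Measurable (Function.uncurry H)) (M : ℝ≥0∞)
    (hM : ∀ h : ℝ, |h| ≤ b i - a i →
      (∫⁻ z, H z (z i + h)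
        ∂(volume.restrict (boxShift a b (fun k => if k = i then h else 0)))) ≤ M) :
    ∫⁻ t, ∫⁻ z, H z t ∂Measure.pi (nu a b) ∂(nu a b i)
      ≤ ENNReal.ofReal (2 * (b i - a i)) * M := by
  rw [sub_chain a b i H hH]
  calc ∫⁻ h, ∫⁻ z, H z (z i + h)
        ∂(volume.restrict (boxShift a b (fun k => if k = i then h else 0))) ∂volume
      ≤ ∫⁻ h, (Set.Icc (-(b i - a i)) (b i - a i)).indicator (fun _ => M) h ∂volume := by
        apply lintegral_mono
        intro h
        by_cases hh : |h| ≤ b i - a i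
        · rw [Set.indicator_of_mem (by rw [Set.mem_Icc, ← abs_le]; exact hh)]
          exact hM h hh
        · show (∫⁻ z, H z (z i + h)
              ∂(volume.restrict (boxShift a b (fun k => if k = i then h else 0)))) ≤ _
          rw [boxShift_single_empty a b i h hh, Measure.restrict_empty, lintegral_zero_measure]
          exact zero_le
    _ = M * volume (Set.Icc (-(b i - a i)) (b i - a i)) :=
        lintegral_indicator_const measurableSet_Icc M
    _ = ENNReal.ofReal (2 * (b i - a i)) * M := by
        rw [Real.volume_Icc, mul_comm]
        congr 1
        ring

set_option maxHeartbeats 2000000 in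
theorem main_finite (p : ℝ≥0∞) (hp0 : p ≠ 0) (hptop : p ≠ ⊤) (a b : Fin d → ℝ)
    (hab : ∀ k, a k ≤ b k) (hvol : volume (box a b) ≠ 0)
    (g : (Fin d → ℝ) → ℝ) (hg : Measurable g)
    (hΩ : totalModulus p (fun _ => 1) g a b (fun k => b k - a k) ≠ ⊤) :
    ∃ β : ℝ, pNorm p (fun x => g x - β) (box a b)
      ≤ (4 * ((d : ℝ≥0∞) + 1) ^ (p.toReal + 1)) ^ (1 / p.toReal) *
        totalModulus p (fun _ => 1) g a b (fun k => b k - a k) := by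
  classical
  set q := p.toReal with hqdef
  have hq : 0 < q := ENNReal.toReal_pos hp0 hptop
  set μ := Measure.pi (nu a b) with hμdef
  set Ω := totalModulus p (fun _ => 1) g a b (fun k => b k - a k) with hΩdef
  have hωΩ : ∀ i : Fin d,
      modulus p (restrictOrder (fun _ => 1) {i}) g a b (fun k => b k - a k) ≤ Ω := by
    intro i
    refine le_trans ?_ (sum_singleton_le p g a b _)
    exact Finset.single_le_sum
      (f := fun i => modulus p (restrictOrder (fun _ => 1) {i}) g a b (fun k => b k - a k))
      (fun k _ => zero_le) (Finset.mem_univ i)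
  have hμuniv : μ Set.univ = volume (box a b) := by
    rw [hμdef, ← restrict_box_eq a b, Measure.restrict_apply_univ]
  have hμtop : μ Set.univ ≠ ⊤ := by
    rw [hμdef, Measure.pi_univ]
    refine (ENNReal.prod_lt_top fun k _ => ?_).ne
    show (volume.restrict (Set.Icc (a k) (b k))) Set.univ < ⊤
    rw [Measure.restrict_apply_univ, Real.volume_Icc]
    exact ENNReal.ofReal_lt_top
  have hμ0 : μ ≠ 0 := by
    rw [← Measure.measure_univ_ne_zero, hμuniv]
    exact hvol
  have hm : ∀ k, nu a b k Set.univ = ENNReal.ofReal (b k - a k) := by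
    intro k
    show (volume.restrict (Set.Icc (a k) (b k))) Set.univ = _
    rw [Measure.restrict_apply_univ, Real.volume_Icc]
  -- per-direction bound
  have step : ∀ i : Fin d,
      (∫⁻ y, ∫⁻ x,
          (‖g (fun k => if (k : ℕ) < (i : ℕ) then y k else x k) -
            g (Function.update (fun k => if (k : ℕ) < (i : ℕ) then y k else x k) i (y i))‖₊
            : ℝ≥0∞) ^ q ∂μ ∂μ)
        ≤ 2 * μ Set.univ * Ω ^ q := by
    intro i
    have hH : Measurable (Function.uncurry fun (z : Fin d → ℝ) (t : ℝ) =>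
        (‖g z - g (Function.update z i t)‖₊ : ℝ≥0∞) ^ q) := measurable_Hq g hg i q
    have hcore := core a b i
      (fun (z : Fin d → ℝ) (t : ℝ) => (‖g z - g (Function.update z i t)‖₊ : ℝ≥0∞) ^ q) hH
    rw [← hμdef] at hcore
    rw [hcore]
    have hsub := bound_after_sub a b i
      (fun (z : Fin d → ℝ) (t : ℝ) => (‖g z - g (Function.update z i t)‖₊ : ℝ≥0∞) ^ q) hH
      (Ω ^ q) ?side
    case side =>
      intro h hh
      have heq : ∀ z : Fin d → ℝ,
          (‖g z - g (Function.update z i (z i + h))‖₊ : ℝ≥0∞) ^ q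
            = (‖mixedDiff (restrictOrder (fun _ => 1) {i})
                (fun k => if k = i then h else 0) g z‖₊ : ℝ≥0∞) ^ q := by
        intro z
        rw [mixedDiff_single i h g z,
          ← nnnorm_neg (g (Function.update z i (z i + h)) - g z), neg_sub]
      rw [lintegral_congr heq]
      have hLp : (pNorm p (mixedDiff (restrictOrder (fun _ => 1) {i})
            (fun k => if k = i then h else 0) g)
            (boxShift a b (fun k => if k = i then h else 0))) ^ q
          = ∫⁻ z, (‖mixedDiff (restrictOrder (fun _ => 1) {i})
              (fun k => if k = i then h else 0) g z‖₊ : ℝ≥0∞) ^ q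
              ∂(volume.restrict (boxShift a b (fun k => if k = i then h else 0))) := by
        rw [pNorm, eLpNorm_eq_lintegral_rpow_enorm_toReal hp0 hptop, ← hqdef, ← ENNReal.rpow_mul,
          one_div_mul_cancel hq.ne', ENNReal.rpow_one]
        simp only [enorm_eq_nnnorm]
      rw [← hLp]
      have hple := pNorm_le_modulus (p := p) (r := restrictOrder (fun _ => 1) {i}) (f := g)
        (a := a) (b := b) (t := fun k => b k - a k)
        (fun k => if k = i then h else 0) (single_mem hab i h hh)
      rw [single_mul i h] at hple
      exact ENNReal.rpow_le_rpow (hple.trans (hωΩ i)) hq.le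
    calc ((∏ k ∈ univ.filter (fun k : Fin d => (k : ℕ) < (i : ℕ)), nu a b k Set.univ) *
         ∏ k ∈ univ.filter (fun k : Fin d => (i : ℕ) < (k : ℕ)), nu a b k Set.univ) *
          ∫⁻ t, ∫⁻ z, (‖g z - g (Function.update z i t)‖₊ : ℝ≥0∞) ^ q ∂μ ∂(nu a b i)
        ≤ ((∏ k ∈ univ.filter (fun k : Fin d => (k : ℕ) < (i : ℕ)), nu a b k Set.univ) *
         ∏ k ∈ univ.filter (fun k : Fin d => (i : ℕ) < (k : ℕ)), nu a b k Set.univ) *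
          (ENNReal.ofReal (2 * (b i - a i)) * Ω ^ q) := by
          apply mul_le_mul_right
          rw [hμdef]
          exact hsub
      _ = 2 * μ Set.univ * Ω ^ q := by
          rw [hμdef, Measure.pi_univ]
          simp_rw [hm]
          rw [ENNReal.ofReal_mul (by norm_num : (0:ℝ) ≤ 2), ENNReal.ofReal_ofNat]
          have hsplit := prod_split i (fun k => ENNReal.ofReal (b k - a k))
          rw [← hsplit]
          ring
  -- pointwise telescoping bound
  have hpt : ∀ y x : Fin d → ℝ, (‖g x - g y‖₊ : ℝ≥0∞) ^ q
      ≤ (d : ℝ≥0∞) ^ q * ∑ i : Fin d,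
          (‖g (fun k => if (k : ℕ) < (i : ℕ) then y k else x k) -
            g (Function.update (fun k => if (k : ℕ) < (i : ℕ) then y k else x k) i (y i))‖₊
            : ℝ≥0∞) ^ q := by
    intro y x
    simp_rw [cut_succ x y]
    have h1 : (‖g x - g y‖₊ : ℝ≥0∞)
        ≤ ∑ i : Fin d, (‖g (fun k => if (k : ℕ) < (i : ℕ) then y k else x k)
            - g (fun k => if (k : ℕ) < (i : ℕ) + 1 then y k else x k)‖₊ : ℝ≥0∞) := by
      rw [telescope g x y]
      calc ((‖∑ i : Fin d, (g (fun k => if (k : ℕ) < (i : ℕ) then y k else x k)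
            - g (fun k => if (k : ℕ) < (i : ℕ) + 1 then y k else x k))‖₊ : ℝ≥0) : ℝ≥0∞)
          ≤ ((∑ i : Fin d, ‖g (fun k => if (k : ℕ) < (i : ℕ) then y k else x k)
            - g (fun k => if (k : ℕ) < (i : ℕ) + 1 then y k else x k)‖₊ : ℝ≥0) : ℝ≥0∞) :=
            ENNReal.coe_le_coe.mpr (nnnorm_sum_le _ _)
        _ = _ := ENNReal.coe_finset_sum _ _
    calc (‖g x - g y‖₊ : ℝ≥0∞) ^ q
        ≤ (∑ i : Fin d, (‖g (fun k => if (k : ℕ) < (i : ℕ) then y k else x k)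
            - g (fun k => if (k : ℕ) < (i : ℕ) + 1 then y k else x k)‖₊ : ℝ≥0∞)) ^ q :=
          ENNReal.rpow_le_rpow h1 hq.le
      _ ≤ (d : ℝ≥0∞) ^ q * ∑ i : Fin d,
            (‖g (fun k => if (k : ℕ) < (i : ℕ) then y k else x k)
            - g (fun k => if (k : ℕ) < (i : ℕ) + 1 then y k else x k)‖₊ : ℝ≥0∞) ^ q :=
          rpow_sum_le hq _
  -- measurability of summands
  have hFi : ∀ i : Fin d, Measurable (fun pr : (Fin d → ℝ) × (Fin d → ℝ) =>
      (‖g (fun k => if (k : ℕ) < (i : ℕ) then pr.1 k else pr.2 k) -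
        g (Function.update (fun k => if (k : ℕ) < (i : ℕ) then pr.1 k else pr.2 k) i (pr.1 i))‖₊
        : ℝ≥0∞) ^ q) := by
    intro i
    exact (measurable_Hq g hg i q).comp
      ((measurable_cutp i).prodMk ((measurable_pi_apply i).comp measurable_fst))
  have hGm : Measurable (fun pr : (Fin d → ℝ) × (Fin d → ℝ) =>
      (‖g pr.2 - g pr.1‖₊ : ℝ≥0∞) ^ q) :=
    (((hg.comp measurable_snd).sub (hg.comp measurable_fst)).nnnorm.coe_nnreal_ennreal).pow
      measurable_const
  have hGmeas : Measurable (fun y : Fin d → ℝ => ∫⁻ x, (‖g x - g y‖₊ : ℝ≥0∞) ^ q ∂μ) :=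
    Measurable.lintegral_prod_right' hGm
  -- the main double-integral bound
  have hB : (∫⁻ y, ∫⁻ x, (‖g x - g y‖₊ : ℝ≥0∞) ^ q ∂μ ∂μ)
      ≤ μ Set.univ * (2 * ((d : ℝ≥0∞) + 1) ^ (q + 1) * Ω ^ q) := by
    have hd1 : ((d : ℝ≥0∞) + 1) ≠ 0 := by simp
    have hd2 : ((d : ℝ≥0∞) + 1) ≠ ⊤ := ENNReal.add_ne_top.mpr ⟨ENNReal.natCast_ne_top d,
      ENNReal.one_ne_top⟩
    have hd : (d : ℝ≥0∞) ^ q * (d : ℝ≥0∞) ≤ ((d : ℝ≥0∞) + 1) ^ (q + 1) := by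
      calc (d : ℝ≥0∞) ^ q * (d : ℝ≥0∞)
          ≤ ((d : ℝ≥0∞) + 1) ^ q * ((d : ℝ≥0∞) + 1) :=
            mul_le_mul' (ENNReal.rpow_le_rpow (self_le_add_right _ _) hq.le)
              (self_le_add_right _ _)
        _ = ((d : ℝ≥0∞) + 1) ^ (q + 1) := by
            rw [ENNReal.rpow_add q 1 hd1 hd2, ENNReal.rpow_one]
    calc (∫⁻ y, ∫⁻ x, (‖g x - g y‖₊ : ℝ≥0∞) ^ q ∂μ ∂μ)
        ≤ ∫⁻ y, ∫⁻ x, (d : ℝ≥0∞) ^ q * ∑ i : Fin d,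
            (‖g (fun k => if (k : ℕ) < (i : ℕ) then y k else x k) -
              g (Function.update (fun k => if (k : ℕ) < (i : ℕ) then y k else x k) i (y i))‖₊
              : ℝ≥0∞) ^ q ∂μ ∂μ := by
          apply lintegral_mono; intro y; apply lintegral_mono; intro x
          exact hpt y x
      _ = (d : ℝ≥0∞) ^ q * ∑ i : Fin d, ∫⁻ y, ∫⁻ x,
            (‖g (fun k => if (k : ℕ) < (i : ℕ) then y k else x k) -
              g (Function.update (fun k => if (k : ℕ) < (i : ℕ) then y k else x k) i (y i))‖₊
              : ℝ≥0∞) ^ q ∂μ ∂μ := by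
          have e1 : ∀ y : Fin d → ℝ, (∫⁻ x, (d : ℝ≥0∞) ^ q * ∑ i : Fin d,
              (‖g (fun k => if (k : ℕ) < (i : ℕ) then y k else x k) -
                g (Function.update (fun k => if (k : ℕ) < (i : ℕ) then y k else x k) i (y i))‖₊
                : ℝ≥0∞) ^ q ∂μ)
              = (d : ℝ≥0∞) ^ q * ∑ i : Fin d, ∫⁻ x,
                (‖g (fun k => if (k : ℕ) < (i : ℕ) then y k else x k) -
                g (Function.update (fun k => if (k : ℕ) < (i : ℕ) then y k else x k) i (y i))‖₊
                : ℝ≥0∞) ^ q ∂μ := by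
            intro y
            have hmx : ∀ i : Fin d, Measurable (fun x : Fin d → ℝ =>
                (‖g (fun k => if (k : ℕ) < (i : ℕ) then y k else x k) -
                g (Function.update (fun k => if (k : ℕ) < (i : ℕ) then y k else x k) i (y i))‖₊
                : ℝ≥0∞) ^ q) := by
              intro i
              exact (hFi i).comp ((measurable_const (a := y)).prodMk measurable_id)
            rw [lintegral_const_mul _ (Finset.measurable_sum _ fun i _ => hmx i)]
            rw [lintegral_finset_sum _ fun i _ => hmx i]
          rw [lintegral_congr e1]
          have hmy : ∀ i : Fin d, Measurable (fun y : Fin d → ℝ => ∫⁻ x,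
              (‖g (fun k => if (k : ℕ) < (i : ℕ) then y k else x k) -
              g (Function.update (fun k => if (k : ℕ) < (i : ℕ) then y k else x k) i (y i))‖₊
              : ℝ≥0∞) ^ q ∂μ) := by
            intro i
            exact Measurable.lintegral_prod_right' (hFi i)
          rw [lintegral_const_mul _ (Finset.measurable_sum _ fun i _ => hmy i)]
          rw [lintegral_finset_sum _ fun i _ => hmy i]
      _ ≤ (d : ℝ≥0∞) ^ q * ∑ _i : Fin d, (2 * μ Set.univ * Ω ^ q) := by
          exact mul_le_mul_right (Finset.sum_le_sum fun i _ => step i) _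
      _ = (d : ℝ≥0∞) ^ q * ((d : ℝ≥0∞) * (2 * μ Set.univ * Ω ^ q)) := by
          rw [Finset.sum_const, Finset.card_univ, Fintype.card_fin, nsmul_eq_mul]
      _ ≤ μ Set.univ * (2 * ((d : ℝ≥0∞) + 1) ^ (q + 1) * Ω ^ q) := by
          have e2 : (d : ℝ≥0∞) ^ q * ((d : ℝ≥0∞) * (2 * μ Set.univ * Ω ^ q))
              = ((d : ℝ≥0∞) ^ q * (d : ℝ≥0∞)) * (2 * μ Set.univ * Ω ^ q) := by ring
          have e3 : μ Set.univ * (2 * ((d : ℝ≥0∞) + 1) ^ (q + 1) * Ω ^ q)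
              = (((d : ℝ≥0∞) + 1) ^ (q + 1)) * (2 * μ Set.univ * Ω ^ q) := by ring
          rw [e2, e3]
          exact mul_le_mul_left hd _
  -- choose a good point y
  obtain ⟨D, hD⟩ : ∃ D' : ℝ≥0∞, D' = 2 * ((d : ℝ≥0∞) + 1) ^ (q + 1) * Ω ^ q := ⟨_, rfl⟩
  rw [← hD] at hB
  have hd2 : ((d : ℝ≥0∞) + 1) ≠ ⊤ := ENNReal.add_ne_top.mpr ⟨ENNReal.natCast_ne_top d,
    ENNReal.one_ne_top⟩
  have hDtop : D ≠ ⊤ := by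
    rw [hD]
    exact ENNReal.mul_ne_top (ENNReal.mul_ne_top (by simp)
      (ENNReal.rpow_ne_top_of_nonneg (by linarith) hd2))
      (ENNReal.rpow_ne_top_of_nonneg hq.le hΩ)
  have hex : ∃ y : Fin d → ℝ, (∫⁻ x, (‖g x - g y‖₊ : ℝ≥0∞) ^ q ∂μ) ≤ 2 * D := by
    by_contra hc
    push_neg at hc
    have hge : μ Set.univ * (2 * D) ≤ ∫⁻ y, (∫⁻ x, (‖g x - g y‖₊ : ℝ≥0∞) ^ q ∂μ) ∂μ := by
      calc μ Set.univ * (2 * D) = ∫⁻ _y, 2 * D ∂μ := by rw [lintegral_const, mul_comm]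
        _ ≤ _ := lintegral_mono fun y => (hc y).le
    have hle := hB
    rcases eq_or_ne D 0 with hD0 | hD0
    · have h0 : ∫⁻ y, (∫⁻ x, (‖g x - g y‖₊ : ℝ≥0∞) ^ q ∂μ) ∂μ = 0 := by
        refine le_antisymm (hle.trans ?_) (zero_le)
        rw [hD0, mul_zero]
      haveI := ae_neBot.mpr hμ0
      obtain ⟨y, hy⟩ := ((lintegral_eq_zero_iff hGmeas).mp h0).exists
      have hcy := hc y
      rw [hD0, mul_zero] at hcy
      exact hcy.ne' hy
    · have h2 : μ Set.univ * (2 * D) ≤ μ Set.univ * D := hge.trans hle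
      have h3 : 2 * D ≤ D := (ENNReal.mul_le_mul_iff_right
        (by rw [hμuniv]; exact hvol) hμtop).mp h2
      have h4 : D < 2 * D := by
        rw [two_mul]
        exact ENNReal.lt_add_right hDtop hD0
      exact absurd h3 (not_le.mpr h4)
  obtain ⟨y, hy⟩ := hex
  refine ⟨g y, ?_⟩
  have hnorm : pNorm p (fun x => g x - g y) (box a b)
      = (∫⁻ x, (‖g x - g y‖₊ : ℝ≥0∞) ^ q ∂μ) ^ (1 / q) := by
    rw [pNorm, restrict_box_eq a b, ← hμdef,
      eLpNorm_eq_lintegral_rpow_enorm_toReal hp0 hptop, ← hqdef]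
    simp only [enorm_eq_nnnorm]
  rw [hnorm]
  have hfinal : (∫⁻ x, (‖g x - g y‖₊ : ℝ≥0∞) ^ q ∂μ) ^ (1 / q) ≤ (2 * D) ^ (1 / q) :=
    ENNReal.rpow_le_rpow hy (by positivity)
  refine hfinal.trans ?_
  rw [hD]
  have e : 2 * (2 * ((d : ℝ≥0∞) + 1) ^ (q + 1) * Ω ^ q)
      = (4 * ((d : ℝ≥0∞) + 1) ^ (q + 1)) * Ω ^ q := by ring
  rw [e, ENNReal.mul_rpow_of_nonneg _ _ (by positivity), ← ENNReal.rpow_mul,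
    mul_one_div_cancel hq.ne', ENNReal.rpow_one]


set_option maxHeartbeats 2000000 in
theorem main_top (a b : Fin d → ℝ)
    (hab : ∀ k, a k ≤ b k) (hvol : volume (box a b) ≠ 0)
    (g : (Fin d → ℝ) → ℝ) (hg : Measurable g) :
    ∃ β : ℝ, pNorm ⊤ (fun x => g x - β) (box a b)
      ≤ totalModulus ⊤ (fun _ => 1) g a b (fun k => b k - a k) := by
  classical
  set μ := Measure.pi (nu a b) with hμdef
  set ω : Fin d → ℝ≥0∞ := fun i =>
    modulus ⊤ (restrictOrder (fun _ => 1) {i}) g a b (fun k => b k - a k) with hω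
  have hμ0 : μ ≠ 0 := by
    rw [← Measure.measure_univ_ne_zero, hμdef, ← restrict_box_eq a b,
      Measure.restrict_apply_univ]
    exact hvol
  -- per-direction : the bad set is null
  have step : ∀ i : Fin d,
      (∫⁻ y, ∫⁻ x,
        (if ω i < (‖g (fun k => if (k : ℕ) < (i : ℕ) then y k else x k) -
            g (Function.update (fun k => if (k : ℕ) < (i : ℕ) then y k else x k) i (y i))‖₊
            : ℝ≥0∞) then 1 else 0) ∂μ ∂μ) = 0 := by
    intro i
    have hH : Measurable (Function.uncurry fun (z : Fin d → ℝ) (t : ℝ) =>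
        (if ω i < (‖g z - g (Function.update z i t)‖₊ : ℝ≥0∞) then (1 : ℝ≥0∞) else 0)) := by
      have h1 : Measurable fun p : (Fin d → ℝ) × ℝ =>
          (‖g p.1 - g (Function.update p.1 i p.2)‖₊ : ℝ≥0∞) :=
        ((hg.comp measurable_fst).sub (hg.comp (measurable_update2 i))).nnnorm.coe_nnreal_ennreal
      exact Measurable.ite (measurableSet_lt measurable_const h1) measurable_const
        measurable_const
    have hcore := core a b i
      (fun (z : Fin d → ℝ) (t : ℝ) =>
        (if ω i < (‖g z - g (Function.update z i t)‖₊ : ℝ≥0∞) then (1 : ℝ≥0∞) else 0)) hH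
    rw [← hμdef] at hcore
    rw [hcore]
    have hsub := bound_after_sub a b i
      (fun (z : Fin d → ℝ) (t : ℝ) =>
        (if ω i < (‖g z - g (Function.update z i t)‖₊ : ℝ≥0∞) then (1 : ℝ≥0∞) else 0)) hH
      0 ?side
    case side =>
      intro h hh
      have hple := pNorm_le_modulus (p := ⊤) (r := restrictOrder (fun _ => 1) {i}) (f := g)
        (a := a) (b := b) (t := fun k => b k - a k)
        (fun k => if k = i then h else 0) (single_mem hab i h hh)
      rw [single_mul i h] at hple
      have hess : ∀ᵐ z ∂(volume.restrict (boxShift a b (fun k => if k = i then h else 0))),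
          (‖mixedDiff (restrictOrder (fun _ => 1) {i})
            (fun k => if k = i then h else 0) g z‖₊ : ℝ≥0∞) ≤ ω i := by
        refine ae_le_eLpNormEssSup.mono fun z hz => (enorm_eq_nnnorm _).symm.le.trans (hz.trans ?_)
        rw [pNorm, eLpNorm_exponent_top] at hple
        exact hple
      have hzero : (fun z : Fin d → ℝ =>
          (if ω i < (‖g z - g (Function.update z i (z i + h))‖₊ : ℝ≥0∞) then (1:ℝ≥0∞) else 0))
          =ᵐ[volume.restrict (boxShift a b (fun k => if k = i then h else 0))]
          (fun _ => (0 : ℝ≥0∞)) := by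
        refine hess.mono fun z hz => ?_
        show (if ω i < (‖g z - g (Function.update z i (z i + h))‖₊ : ℝ≥0∞)
          then (1:ℝ≥0∞) else 0) = 0
        have heq : (‖g z - g (Function.update z i (z i + h))‖₊ : ℝ≥0∞)
            = (‖mixedDiff (restrictOrder (fun _ => 1) {i})
                (fun k => if k = i then h else 0) g z‖₊ : ℝ≥0∞) := by
          rw [mixedDiff_single i h g z,
            ← nnnorm_neg (g (Function.update z i (z i + h)) - g z), neg_sub]
        rw [heq, if_neg (not_lt.mpr hz)]
      calc (∫⁻ z, (if ω i < (‖g z - g (Function.update z i (z i + h))‖₊ : ℝ≥0∞)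
              then (1:ℝ≥0∞) else 0)
            ∂(volume.restrict (boxShift a b (fun k => if k = i then h else 0))))
          = ∫⁻ _z, (0:ℝ≥0∞)
            ∂(volume.restrict (boxShift a b (fun k => if k = i then h else 0))) :=
            lintegral_congr_ae hzero
        _ = 0 := lintegral_zero
        _ ≤ 0 := le_rfl
    rw [mul_zero] at hsub
    have h0 : (∫⁻ (t : ℝ), ∫⁻ (z : Fin d → ℝ),
        (fun (z : Fin d → ℝ) (t : ℝ) =>
          if ω i < (‖g z - g (Function.update z i t)‖₊ : ℝ≥0∞) then (1:ℝ≥0∞) else 0) z t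
          ∂μ ∂nu a b i) = 0 := le_antisymm hsub (zero_le)
    rw [h0, mul_zero]
  -- convert to a.e. statements
  have hmx : ∀ i : Fin d, Measurable (fun pr : (Fin d → ℝ) × (Fin d → ℝ) =>
      (if ω i < (‖g (fun k => if (k : ℕ) < (i : ℕ) then pr.1 k else pr.2 k) -
          g (Function.update (fun k => if (k : ℕ) < (i : ℕ) then pr.1 k else pr.2 k) i (pr.1 i))‖₊
          : ℝ≥0∞) then (1:ℝ≥0∞) else 0)) := by
    intro i
    have h1 : Measurable fun pr : (Fin d → ℝ) × (Fin d → ℝ) =>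
        (‖g (fun k => if (k : ℕ) < (i : ℕ) then pr.1 k else pr.2 k) -
          g (Function.update (fun k => if (k : ℕ) < (i : ℕ) then pr.1 k else pr.2 k) i (pr.1 i))‖₊
          : ℝ≥0∞) := by
      have h2 : Measurable fun pr : (Fin d → ℝ) × (Fin d → ℝ) =>
          (fun k : Fin d => if (k : ℕ) < (i : ℕ) then pr.1 k else pr.2 k) := measurable_cutp i
      exact ((hg.comp h2).sub
        (hg.comp ((measurable_update2 i).comp
          (h2.prodMk ((measurable_pi_apply i).comp measurable_fst))))).nnnorm.coe_nnreal_ennreal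
    exact Measurable.ite (measurableSet_lt measurable_const h1) measurable_const measurable_const
  have hae : ∀ i : Fin d, ∀ᵐ y ∂μ, ∀ᵐ x ∂μ,
      (‖g (fun k => if (k : ℕ) < (i : ℕ) then y k else x k) -
        g (Function.update (fun k => if (k : ℕ) < (i : ℕ) then y k else x k) i (y i))‖₊
        : ℝ≥0∞) ≤ ω i := by
    intro i
    have hmy : Measurable (fun y : Fin d → ℝ => ∫⁻ x,
        (if ω i < (‖g (fun k => if (k : ℕ) < (i : ℕ) then y k else x k) -
          g (Function.update (fun k => if (k : ℕ) < (i : ℕ) then y k else x k) i (y i))‖₊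
          : ℝ≥0∞) then (1:ℝ≥0∞) else 0) ∂μ) :=
      Measurable.lintegral_prod_right' (hmx i)
    have h1 := (lintegral_eq_zero_iff hmy).mp (step i)
    refine h1.mono fun y hy => ?_
    have hmxy : Measurable (fun x : Fin d → ℝ =>
        (if ω i < (‖g (fun k => if (k : ℕ) < (i : ℕ) then y k else x k) -
          g (Function.update (fun k => if (k : ℕ) < (i : ℕ) then y k else x k) i (y i))‖₊
          : ℝ≥0∞) then (1:ℝ≥0∞) else 0)) := by
      exact (hmx i).comp ((measurable_const (a := y)).prodMk measurable_id)
    have hy' : (∫⁻ x, (if ω i < (‖g (fun k => if (k : ℕ) < (i : ℕ) then y k else x k) -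
        g (Function.update (fun k => if (k : ℕ) < (i : ℕ) then y k else x k) i (y i))‖₊
        : ℝ≥0∞) then (1:ℝ≥0∞) else 0) ∂μ) = 0 := hy
    have h2 := (lintegral_eq_zero_iff hmxy).mp hy'
    refine h2.mono fun x hx => ?_
    have hx' : (if ω i < (‖g (fun k => if (k : ℕ) < (i : ℕ) then y k else x k) -
        g (Function.update (fun k => if (k : ℕ) < (i : ℕ) then y k else x k) i (y i))‖₊
        : ℝ≥0∞) then (1:ℝ≥0∞) else 0) = 0 := hx
    by_contra hcon
    rw [if_pos (not_le.mp hcon)] at hx'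
    exact one_ne_zero hx'
  have hally : ∀ᵐ y ∂μ, ∀ᵐ x ∂μ, (‖g x - g y‖₊ : ℝ≥0∞) ≤ ∑ i : Fin d, ω i := by
    have h1 := ae_all_iff.mpr hae
    refine h1.mono fun y hy => ?_
    have h2 := ae_all_iff.mpr hy
    refine h2.mono fun x hx => ?_
    have h3 : (‖g x - g y‖₊ : ℝ≥0∞)
        ≤ ∑ i : Fin d, (‖g (fun k => if (k : ℕ) < (i : ℕ) then y k else x k)
            - g (fun k => if (k : ℕ) < (i : ℕ) + 1 then y k else x k)‖₊ : ℝ≥0∞) := by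
      rw [telescope g x y]
      calc ((‖∑ i : Fin d, (g (fun k => if (k : ℕ) < (i : ℕ) then y k else x k)
            - g (fun k => if (k : ℕ) < (i : ℕ) + 1 then y k else x k))‖₊ : ℝ≥0) : ℝ≥0∞)
          ≤ ((∑ i : Fin d, ‖g (fun k => if (k : ℕ) < (i : ℕ) then y k else x k)
            - g (fun k => if (k : ℕ) < (i : ℕ) + 1 then y k else x k)‖₊ : ℝ≥0) : ℝ≥0∞) :=
            ENNReal.coe_le_coe.mpr (nnnorm_sum_le _ _)
        _ = _ := ENNReal.coe_finset_sum _ _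
    refine h3.trans (Finset.sum_le_sum fun i _ => ?_)
    have := hx i
    rw [cut_succ x y i] at this
    exact this
  haveI := ae_neBot.mpr hμ0
  obtain ⟨y, hy⟩ := hally.exists
  refine ⟨g y, ?_⟩
  have h4 : pNorm ⊤ (fun x => g x - g y) (box a b)
      = essSup (fun x => (‖g x - g y‖₊ : ℝ≥0∞)) μ := by
    rw [pNorm, restrict_box_eq a b, ← hμdef, eLpNorm_exponent_top]
    rfl
  rw [h4]
  refine (essSup_le_of_ae_le _ (hy.mono fun x hx => hx)).trans ?_
  rw [hω]
  exact sum_singleton_le ⊤ g a b _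


end ApproxConstAux

open ApproxConstAux in
/-- **Approximation by constants.** For `0 < p ≤ ∞` there is a constant `C = C(d,p)` such
that for every `d`-parallelepiped `Q` and every `f ∈ L_p(Q)` there exists `β ∈ ℝ` with
`‖f − β‖_{p,Q} ≤ C · Ω_𝟏(f, δ(Q))_{p,Q}`, where `𝟏 = (1,…,1)`. -/
theorem approx_by_constants (d : ℕ) (p : ℝ≥0∞) (hp : 0 < p) :
    ∃ C : ℝ≥0, 0 < C ∧
      ∀ a b : Fin d → ℝ, (∀ i, a i ≤ b i) →
        ∀ f : (Fin d → ℝ) → ℝ, MemLp f p (volume.restrict (box a b)) →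
          ∃ β : ℝ,
            pNorm p (fun x => f x - β) (box a b) ≤
              C * totalModulus p (fun _ => 1) f a b (fun i => b i - a i) := by
    classical
  set q := p.toReal with hq
  have hCpos : (0:ℝ≥0) < 1 + (4 * ((d : ℝ≥0) + 1) ^ (q + 1)) ^ (1 / q) :=
    add_pos_of_pos_of_nonneg one_pos (zero_le)
  refine ⟨1 + (4 * ((d : ℝ≥0) + 1) ^ (q + 1)) ^ (1 / q), hCpos, ?_⟩
  intro a b hab f hf
  by_cases hvol : volume (box a b) = 0
  · refine ⟨0, ?_⟩
    have h0 : volume.restrict (box a b) = 0 := Measure.restrict_eq_zero.mpr hvol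
    rw [pNorm, h0, eLpNorm_measure_zero]
    exact zero_le
  by_cases hΩ : totalModulus p (fun _ => 1) f a b (fun i => b i - a i) = ⊤
  · refine ⟨0, ?_⟩
    rw [hΩ, ENNReal.mul_top (ENNReal.coe_ne_zero.mpr hCpos.ne')]
    exact le_top
  obtain ⟨g, hgm, hfg⟩ : ∃ g : (Fin d → ℝ) → ℝ, Measurable g ∧
      f =ᵐ[volume.restrict (box a b)] g :=
    ⟨hf.1.mk f, hf.1.stronglyMeasurable_mk.measurable, hf.1.ae_eq_mk⟩
  have hΩfg := totalModulus_congr_ae p (fun i => b i - a i) hfg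
  have hCone : (1:ℝ≥0∞) ≤ ((1 + (4 * ((d : ℝ≥0) + 1) ^ (q + 1)) ^ (1 / q) : ℝ≥0) : ℝ≥0∞) := by
    rw [ENNReal.one_le_coe_iff]
    exact le_add_of_nonneg_right (zero_le)
  rcases eq_or_ne p ⊤ with hptop | hptop
  · subst hptop
    obtain ⟨β, hβ⟩ := main_top a b hab hvol g hgm
    refine ⟨β, ?_⟩
    have heq : pNorm ⊤ (fun x => f x - β) (box a b) = pNorm ⊤ (fun x => g x - β) (box a b) := by
      rw [pNorm, pNorm]
      exact eLpNorm_congr_ae (hfg.sub (Filter.EventuallyEq.refl _ _))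
    rw [heq, hΩfg]
    refine hβ.trans ?_
    conv_lhs => rw [← one_mul (totalModulus ⊤ (fun _ => 1) g a b fun i => b i - a i)]
    exact mul_le_mul_left hCone _
  · obtain ⟨β, hβ⟩ := main_finite p hp.ne' hptop a b hab hvol g hgm (by rw [← hΩfg]; exact hΩ)
    refine ⟨β, ?_⟩
    have heq : pNorm p (fun x => f x - β) (box a b) = pNorm p (fun x => g x - β) (box a b) := by
      rw [pNorm, pNorm]
      exact eLpNorm_congr_ae (hfg.sub (Filter.EventuallyEq.refl _ _))
    rw [heq, hΩfg]
    refine hβ.trans (mul_le_mul_left ?_ _)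
    have hq1 : (0:ℝ) ≤ q + 1 := by
      have := ENNReal.toReal_nonneg (a := p)
      rw [← hq] at this
      linarith
    have hq0 : (0:ℝ) ≤ 1/q := by
      have := ENNReal.toReal_nonneg (a := p)
      rw [← hq] at this
      positivity
    have hcoe : ((4 * ((d : ℝ≥0) + 1) ^ (q + 1) : ℝ≥0) : ℝ≥0∞)
        = 4 * ((d : ℝ≥0∞) + 1) ^ (q + 1) := by
      rw [ENNReal.coe_mul, ENNReal.coe_rpow_of_nonneg _ hq1, ENNReal.coe_add,
        ENNReal.coe_natCast, ENNReal.coe_one, ENNReal.coe_ofNat]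
    calc (4 * ((d : ℝ≥0∞) + 1) ^ (q + 1)) ^ (1 / q)
        = (((4 * ((d : ℝ≥0) + 1) ^ (q + 1) : ℝ≥0) : ℝ≥0∞)) ^ (1/q) := by rw [hcoe]
      _ = (((4 * ((d : ℝ≥0) + 1) ^ (q + 1) : ℝ≥0) ^ (1/q) : ℝ≥0) : ℝ≥0∞) := by
          rw [ENNReal.coe_rpow_of_nonneg _ hq0]
      _ ≤ ((1 + (4 * ((d : ℝ≥0) + 1) ^ (q + 1)) ^ (1/q) : ℝ≥0) : ℝ≥0∞) :=
          ENNReal.coe_le_coe.mpr (le_add_of_nonneg_left (zero_le))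
end

section
/- (Double-integral oscillation bound, d = 2, 0 < p ≤ 1.) Let 0 < p ≤ 1, Q = [a₁,b₁] × [a₂,b₂], and δ(Q) = (δ₁,δ₂) = (b₁−a₁, b₂−a₂). Then for every f ∈ L_p(Q): ∫_Q ∫_Q |f(x) − f(y)|^p dx dy ≤ 2 δ₁ δ₂ [ ω_{(1,0)}(f, δ(Q))_{p,Q}^p + ω_{(0,1)}(f, δ(Q))_{p,Q}^p ]. -/
open MeasureTheory ENNReal NNReal Finset

section OscillationAux

/-- closed form of the mixed difference for `r = (1,0)`. -/
lemma mixedDiff_10 (h : Fin 2 → ℝ) (f : (Fin 2 → ℝ) → ℝ) (x : Fin 2 → ℝ) :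
    mixedDiff ![1,0] h f x = f (x + ![h 0, 0]) - f x := by
  classical
  unfold mixedDiff
  rw [show (Finset.univ : Finset ((i : Fin 2) → Fin ((![1,0] : Fin 2 → ℕ) i + 1))) =
      {(fun i => 0), Fin.cases (motive := fun i => Fin ((![1,0] : Fin 2 → ℕ) i + 1)) 1 (fun _ => 0)} from by decide,
    Finset.sum_pair (by decide)]
  have e1 : ∀ (j : (i : Fin 2) → Fin ((![1,0] : Fin 2 → ℕ) i + 1)),
      (∏ i, (-1 : ℝ) ^ ((![1,0] : Fin 2 → ℕ) i - (j i : ℕ)) * (((![1,0] : Fin 2 → ℕ) i).choose (j i) : ℝ))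
      = (-1 : ℝ) ^ (1 - (j 0 : ℕ)) * (Nat.choose 1 (j 0) : ℝ) := by
    intro j
    rw [Fin.prod_univ_two]
    have h1 : ((j 1 : ℕ)) = 0 := by
      have := (j 1).isLt
      have h0 : (![1,0] : Fin 2 → ℕ) 1 = 0 := rfl
      omega
    rw [h1]
    norm_num
  rw [e1, e1]
  have a1 : (fun i => x i + ((((fun i => (0 : Fin ((![1,0] : Fin 2 → ℕ) i + 1))) i : ℕ) : ℝ)) * h i) = x := by
    funext i; simp
  have a2 : (fun i => x i + (((Fin.cases (motive := fun i => Fin ((![1,0] : Fin 2 → ℕ) i + 1)) 1 (fun _ => 0)) i : ℕ) : ℝ) * h i) = x + ![h 0, 0] := by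
    funext i
    match i with
    | 0 =>
      show x 0 + (((1 : Fin 2) : ℕ) : ℝ) * h 0 = x 0 + ![h 0, 0] 0
      norm_num
    | 1 =>
      show x 1 + (((0 : Fin 1) : ℕ) : ℝ) * h 1 = x 1 + ![h 0, 0] 1
      norm_num
  rw [a1, a2]
  have b1 : (((fun i => (0 : Fin ((![1,0] : Fin 2 → ℕ) i + 1))) 0 : ℕ)) = 0 := rfl
  have b2 : (((Fin.cases (motive := fun i => Fin ((![1,0] : Fin 2 → ℕ) i + 1)) 1 (fun _ => 0)) 0 : ℕ)) = 1 := rfl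
  rw [b1, b2]
  norm_num
  ring

/-- closed form of the mixed difference for `r = (0,1)`. -/
lemma mixedDiff_01 (h : Fin 2 → ℝ) (f : (Fin 2 → ℝ) → ℝ) (x : Fin 2 → ℝ) :
    mixedDiff ![0,1] h f x = f (x + ![0, h 1]) - f x := by
  classical
  unfold mixedDiff
  rw [show (Finset.univ : Finset ((i : Fin 2) → Fin ((![0,1] : Fin 2 → ℕ) i + 1))) =
      {(fun i => 0), Fin.cases (motive := fun i => Fin ((![0,1] : Fin 2 → ℕ) i + 1)) 0 (fun _ => 1)} from by decide,
    Finset.sum_pair (by decide)]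
  have e1 : ∀ (j : (i : Fin 2) → Fin ((![0,1] : Fin 2 → ℕ) i + 1)),
      (∏ i, (-1 : ℝ) ^ ((![0,1] : Fin 2 → ℕ) i - (j i : ℕ)) * (((![0,1] : Fin 2 → ℕ) i).choose (j i) : ℝ))
      = (-1 : ℝ) ^ (1 - (j 1 : ℕ)) * (Nat.choose 1 (j 1) : ℝ) := by
    intro j
    rw [Fin.prod_univ_two]
    have h1 : ((j 0 : ℕ)) = 0 := by
      have := (j 0).isLt
      have h0 : (![0,1] : Fin 2 → ℕ) 0 = 0 := rfl
      omega
    rw [h1]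
    norm_num
  rw [e1, e1]
  have a1 : (fun i => x i + ((((fun i => (0 : Fin ((![0,1] : Fin 2 → ℕ) i + 1))) i : ℕ) : ℝ)) * h i) = x := by
    funext i; simp
  have a2 : (fun i => x i + (((Fin.cases (motive := fun i => Fin ((![0,1] : Fin 2 → ℕ) i + 1)) 0 (fun _ => 1)) i : ℕ) : ℝ) * h i) = x + ![0, h 1] := by
    funext i
    match i with
    | 0 =>
      show x 0 + (((0 : Fin 1) : ℕ) : ℝ) * h 0 = x 0 + ![0, h 1] 0
      norm_num
    | 1 =>
      show x 1 + (((1 : Fin 2) : ℕ) : ℝ) * h 1 = x 1 + ![0, h 1] 1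
      norm_num
  rw [a1, a2]
  have b1 : (((fun i => (0 : Fin ((![0,1] : Fin 2 → ℕ) i + 1))) 1 : ℕ)) = 0 := rfl
  have b2 : (((Fin.cases (motive := fun i => Fin ((![0,1] : Fin 2 → ℕ) i + 1)) 0 (fun _ => 1)) 1 : ℕ)) = 1 := rfl
  rw [b1, b2]
  norm_num
  ring

/-- the measurable equivalence `(Fin 2 → ℝ) ≃ᵐ ℝ × ℝ`. -/
noncomputable abbrev oscEqv : (Fin 2 → ℝ) ≃ᵐ ℝ × ℝ := MeasurableEquiv.finTwoArrow

lemma transfer (S : Set (ℝ × ℝ)) (hS : MeasurableSet S) (G : ℝ × ℝ → ℝ≥0∞) :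
    ∫⁻ x in oscEqv ⁻¹' S, G (oscEqv x) = ∫⁻ z in S, G z := by
  have h1 : (volume : Measure (ℝ × ℝ)).restrict S
      = Measure.map oscEqv (volume.restrict (oscEqv ⁻¹' S)) := by
    rw [← (volume_preserving_finTwoArrow ℝ).map_eq, Measure.restrict_map oscEqv.measurable hS]
  rw [h1, lintegral_map_equiv]

lemma tri {p : ℝ} (hp0 : 0 < p) (hp1 : p ≤ 1) (u v w : ℝ) :
    ENNReal.ofReal (|u - w| ^ p) ≤ ENNReal.ofReal (|u - v| ^ p) + ENNReal.ofReal (|v - w| ^ p) := by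
  rw [← ENNReal.ofReal_rpow_of_nonneg (abs_nonneg _) hp0.le,
      ← ENNReal.ofReal_rpow_of_nonneg (abs_nonneg _) hp0.le,
      ← ENNReal.ofReal_rpow_of_nonneg (abs_nonneg _) hp0.le]
  calc ENNReal.ofReal |u - w| ^ p
      ≤ (ENNReal.ofReal |u - v| + ENNReal.ofReal |v - w|) ^ p := by
        apply ENNReal.rpow_le_rpow _ hp0.le
        rw [← ENNReal.ofReal_add (abs_nonneg _) (abs_nonneg _)]
        exact ENNReal.ofReal_le_ofReal ((abs_sub_le u v w))
    _ ≤ _ := ENNReal.rpow_add_le_add_rpow _ _ hp0.le hp1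

lemma pow_eLpNorm {α : Type*} [MeasurableSpace α] {p : ℝ} (hp0 : 0 < p)
    (F : α → ℝ) (μ : Measure α) :
    (eLpNorm F (ENNReal.ofReal p) μ) ^ p = ∫⁻ x, ENNReal.ofReal (|F x| ^ p) ∂μ := by
  rw [eLpNorm_eq_lintegral_rpow_enorm_toReal (by simp [hp0]) ENNReal.ofReal_ne_top,
    ENNReal.toReal_ofReal hp0.le, ← ENNReal.rpow_mul, one_div_mul_cancel hp0.ne',
    ENNReal.rpow_one]
  refine lintegral_congr fun x => ?_
  rw [Real.enorm_eq_ofReal_abs, ENNReal.ofReal_rpow_of_nonneg (abs_nonneg _) hp0.le]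

lemma meas_aux {γ : Type*} [MeasurableSpace γ] {p : ℝ} (hp0 : 0 < p) {u v : γ → ℝ}
    (hu : Measurable u) (hv : Measurable v) :
    Measurable fun x => ENNReal.ofReal (|u x - v x| ^ p) := by
  apply Measurable.ennreal_ofReal
  exact (Real.continuous_rpow_const hp0.le).measurable.comp (hu.sub hv).abs

lemma osc_sub {δ a0 b0 : ℝ} (hd : b0 - a0 ≤ δ)
    (K : ℝ → ℝ → ℝ≥0∞) (hK : Measurable fun z : ℝ × ℝ => K z.1 z.2) (W : ℝ≥0∞)
    (hW : ∀ h : ℝ, |h| ≤ δ →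
      (∫⁻ s, ((Set.Icc a0 b0).indicator 1 s) *
        (((Set.Icc a0 b0).indicator 1 (s + h)) * K s (s + h))) ≤ W) :
    (∫⁻ s in Set.Icc a0 b0, ∫⁻ s' in Set.Icc a0 b0, K s s') ≤ 2 * ENNReal.ofReal δ * W := by
  set I := Set.Icc a0 b0 with hIdef
  have hI : MeasurableSet I := measurableSet_Icc
  have hind : Measurable (I.indicator (1 : ℝ → ℝ≥0∞)) := measurable_one.indicator hI
  have step1 : ∀ s : ℝ, (∫⁻ s' in I, K s s')
      = ∫⁻ h, (I.indicator 1 (s + h)) * K s (s + h) := by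
    intro s
    rw [← lintegral_indicator hI]
    have : ∀ u : ℝ, I.indicator (K s) u = I.indicator 1 u * K s u := by
      intro u; by_cases hu : u ∈ I <;> simp [hu]
    rw [lintegral_congr this]
    rw [← lintegral_add_left_eq_self (fun u => I.indicator 1 u * K s u) s]
  calc (∫⁻ s in I, ∫⁻ s' in I, K s s')
      = ∫⁻ s in I, ∫⁻ h, (I.indicator 1 (s + h)) * K s (s + h) := by
        exact lintegral_congr fun s => step1 s
    _ = ∫⁻ s, ∫⁻ h, (I.indicator 1 s) * ((I.indicator 1 (s + h)) * K s (s + h)) := by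
        rw [← lintegral_indicator hI]
        refine lintegral_congr fun s => ?_
        by_cases hs : s ∈ I
        · simp [hs]
        · simp [hs]
    _ = ∫⁻ h, ∫⁻ s, (I.indicator 1 s) * ((I.indicator 1 (s + h)) * K s (s + h)) := by
        apply lintegral_lintegral_swap
        apply Measurable.aemeasurable
        apply Measurable.mul
        · exact hind.comp measurable_fst
        · apply Measurable.mul
          · exact hind.comp (measurable_fst.add measurable_snd)
          · exact hK.comp ((measurable_fst).prodMk (measurable_fst.add measurable_snd))
    _ ≤ ∫⁻ h, (Set.Icc (-δ) δ).indicator (fun _ => W) h := by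
        refine lintegral_mono fun h => ?_
        by_cases hh : |h| ≤ δ
        · have hmem : h ∈ Set.Icc (-δ) δ := abs_le.mp hh
          rw [Set.indicator_of_mem hmem]
          exact hW h hh
        · rw [Set.indicator_of_notMem (by simpa [Set.mem_Icc, abs_le] using hh)]
          have : ∀ s : ℝ, (I.indicator 1 s) * ((I.indicator 1 (s + h)) * K s (s + h)) = 0 := by
            intro s
            by_cases hs : s ∈ I
            · by_cases hsh : s + h ∈ I
              · exfalso
                apply hh
                rw [hIdef, Set.mem_Icc] at hs hsh
                rw [abs_le]
                constructor <;> nlinarith [hs.1, hs.2, hsh.1, hsh.2]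
              · simp [hsh]
            · simp [hs]
          rw [lintegral_congr this]
          simp
    _ = W * volume (Set.Icc (-δ) δ) := lintegral_indicator_const measurableSet_Icc W
    _ = 2 * ENNReal.ofReal δ * W := by
        rw [Real.volume_Icc, show δ - -δ = 2 * δ by ring, ENNReal.ofReal_mul (by norm_num)]
        rw [ENNReal.ofReal_ofNat]
        ring

lemma modBound0 (p : ℝ) (hp0 : 0 < p) (a b : Fin 2 → ℝ) (hab : ∀ i, a i ≤ b i)
    (f : (Fin 2 → ℝ) → ℝ) (hm : Measurable f) (h : ℝ) (hh : |h| ≤ b 0 - a 0) :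
    (∫⁻ s, ((Set.Icc (a 0) (b 0)).indicator 1 s) *
      (((Set.Icc (a 0) (b 0)).indicator 1 (s + h)) *
        ∫⁻ t in Set.Icc (a 1) (b 1),
          ENNReal.ofReal (|f (oscEqv.symm (s + h, t)) - f (oscEqv.symm (s, t))| ^ p)))
    ≤ (modulus (ENNReal.ofReal p) ![1, 0] f a b (fun i => b i - a i)) ^ p := by
  have hI0 : MeasurableSet (Set.Icc (a 0) (b 0)) := measurableSet_Icc
  have hI1 : MeasurableSet (Set.Icc (a 1) (b 1)) := measurableSet_Icc
  have hS0 : MeasurableSet (Set.Icc (a 0) (b 0) ∩ (fun s => s + h) ⁻¹' (Set.Icc (a 0) (b 0))) :=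
    hI0.inter (hI0.preimage (measurable_add_const h))
  have hpr : (volume : Measure (ℝ × ℝ)).restrict
        ((Set.Icc (a 0) (b 0) ∩ (fun s => s + h) ⁻¹' (Set.Icc (a 0) (b 0))) ×ˢ Set.Icc (a 1) (b 1))
      = (volume.restrict (Set.Icc (a 0) (b 0) ∩ (fun s => s + h) ⁻¹' (Set.Icc (a 0) (b 0)))).prod
          (volume.restrict (Set.Icc (a 1) (b 1))) := by
    rw [Measure.volume_eq_prod, Measure.prod_restrict]
  have hset : oscEqv ⁻¹' ((Set.Icc (a 0) (b 0) ∩ (fun s => s + h) ⁻¹' (Set.Icc (a 0) (b 0))) ×ˢ Set.Icc (a 1) (b 1))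
      = boxShift a b (fun i => (((![1,0] : Fin 2 → ℕ) i : ℕ) : ℝ) * (![h, 0] : Fin 2 → ℝ) i) := by
    ext x
    simp only [Set.mem_preimage, Set.mem_prod, Set.mem_inter_iff, boxShift, Set.mem_setOf_eq,
      Fin.forall_fin_two]
    norm_num
  calc (∫⁻ s, ((Set.Icc (a 0) (b 0)).indicator 1 s) *
      (((Set.Icc (a 0) (b 0)).indicator 1 (s + h)) *
        ∫⁻ t in Set.Icc (a 1) (b 1),
          ENNReal.ofReal (|f (oscEqv.symm (s + h, t)) - f (oscEqv.symm (s, t))| ^ p)))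
      = ∫⁻ s in Set.Icc (a 0) (b 0) ∩ (fun s => s + h) ⁻¹' (Set.Icc (a 0) (b 0)),
          ∫⁻ t in Set.Icc (a 1) (b 1),
            ENNReal.ofReal (|f (oscEqv.symm (s + h, t)) - f (oscEqv.symm (s, t))| ^ p) := by
        rw [← lintegral_indicator hS0]
        refine lintegral_congr fun s => ?_
        by_cases hs : s ∈ Set.Icc (a 0) (b 0)
        · by_cases hsh : s + h ∈ Set.Icc (a 0) (b 0)
          · have hm1 : s ∈ Set.Icc (a 0) (b 0) ∩ (fun s => s + h) ⁻¹' Set.Icc (a 0) (b 0) :=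
              ⟨hs, hsh⟩
            rw [Set.indicator_of_mem hm1, Set.indicator_of_mem hs, Set.indicator_of_mem hsh]
            simp
          · have hm1 : s ∉ Set.Icc (a 0) (b 0) ∩ (fun s => s + h) ⁻¹' Set.Icc (a 0) (b 0) :=
              fun hc => hsh hc.2
            rw [Set.indicator_of_notMem hm1, Set.indicator_of_notMem hsh]
            simp
        · have hm1 : s ∉ Set.Icc (a 0) (b 0) ∩ (fun s => s + h) ⁻¹' Set.Icc (a 0) (b 0) :=
              fun hc => hs hc.1
          rw [Set.indicator_of_notMem hm1, Set.indicator_of_notMem hs]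
          simp
    _ = ∫⁻ z in (Set.Icc (a 0) (b 0) ∩ (fun s => s + h) ⁻¹' (Set.Icc (a 0) (b 0))) ×ˢ Set.Icc (a 1) (b 1),
          ENNReal.ofReal (|f (oscEqv.symm (z.1 + h, z.2)) - f (oscEqv.symm (z.1, z.2))| ^ p) := by
        rw [hpr]
        exact (lintegral_prod _ (Measurable.aemeasurable (meas_aux hp0
          ((hm.comp oscEqv.symm.measurable).comp
            ((measurable_fst.add_const h).prodMk measurable_snd))
          ((hm.comp oscEqv.symm.measurable).comp
            (measurable_fst.prodMk measurable_snd))))).symm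
    _ = ∫⁻ x in oscEqv ⁻¹' ((Set.Icc (a 0) (b 0) ∩ (fun s => s + h) ⁻¹' (Set.Icc (a 0) (b 0))) ×ˢ Set.Icc (a 1) (b 1)),
          ENNReal.ofReal (|f (oscEqv.symm ((oscEqv x).1 + h, (oscEqv x).2)) - f (oscEqv.symm ((oscEqv x).1, (oscEqv x).2))| ^ p) :=
        (transfer _ (hS0.prod hI1) _).symm
    _ = ∫⁻ x in boxShift a b (fun i => (((![1,0] : Fin 2 → ℕ) i : ℕ) : ℝ) * (![h, 0] : Fin 2 → ℝ) i),
          ENNReal.ofReal (|mixedDiff ![1,0] ![h,0] f x| ^ p) := by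
        rw [hset]
        refine lintegral_congr fun x => ?_
        congr 2
        rw [mixedDiff_10]
        have k1 : oscEqv.symm ((oscEqv x).1 + h, (oscEqv x).2)
            = x + ![(![h, 0] : Fin 2 → ℝ) 0, 0] := by
          funext i
          match i with
          | 0 =>
            show x 0 + h = x 0 + ![(![h, 0] : Fin 2 → ℝ) 0, 0] 0
            simp
          | 1 =>
            show x 1 = x 1 + ![(![h, 0] : Fin 2 → ℝ) 0, 0] 1
            simp
        have k2 : oscEqv.symm ((oscEqv x).1, (oscEqv x).2) = x := by
          funext i
          match i with
          | 0 => rfl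
          | 1 => rfl
        rw [k1, k2]
    _ = (eLpNorm (mixedDiff ![1,0] ![h,0] f) (ENNReal.ofReal p)
          (volume.restrict (boxShift a b (fun i => (((![1,0] : Fin 2 → ℕ) i : ℕ) : ℝ) * (![h, 0] : Fin 2 → ℝ) i)))) ^ p :=
        (pow_eLpNorm hp0 _ _).symm
    _ ≤ (modulus (ENNReal.ofReal p) ![1, 0] f a b (fun i => b i - a i)) ^ p := by
        apply ENNReal.rpow_le_rpow _ hp0.le
        have hmem : (![h, 0] : Fin 2 → ℝ) ∈ {h' : Fin 2 → ℝ | ∀ i, |h' i| ≤ b i - a i} := by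
          rw [Set.mem_setOf_eq, Fin.forall_fin_two]
          constructor
          · simpa using hh
          · simpa using sub_nonneg.mpr (hab 1)
        exact le_biSup (fun h' : Fin 2 → ℝ =>
          pNorm (ENNReal.ofReal p) (mixedDiff ![1,0] h' f)
            (boxShift a b fun i => (((![1,0] : Fin 2 → ℕ) i : ℕ) : ℝ) * h' i)) hmem

lemma modBound1 (p : ℝ) (hp0 : 0 < p) (a b : Fin 2 → ℝ) (hab : ∀ i, a i ≤ b i)
    (f : (Fin 2 → ℝ) → ℝ) (hm : Measurable f) (h : ℝ) (hh : |h| ≤ b 1 - a 1) :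
    (∫⁻ t, ((Set.Icc (a 1) (b 1)).indicator 1 t) *
      (((Set.Icc (a 1) (b 1)).indicator 1 (t + h)) *
        ∫⁻ s in Set.Icc (a 0) (b 0),
          ENNReal.ofReal (|f (oscEqv.symm (s, t + h)) - f (oscEqv.symm (s, t))| ^ p)))
    ≤ (modulus (ENNReal.ofReal p) ![0, 1] f a b (fun i => b i - a i)) ^ p := by
  have hI0 : MeasurableSet (Set.Icc (a 0) (b 0)) := measurableSet_Icc
  have hI1 : MeasurableSet (Set.Icc (a 1) (b 1)) := measurableSet_Icc
  have hS1 : MeasurableSet (Set.Icc (a 1) (b 1) ∩ (fun t => t + h) ⁻¹' (Set.Icc (a 1) (b 1))) :=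
    hI1.inter (hI1.preimage (measurable_add_const h))
  have hpr : (volume : Measure (ℝ × ℝ)).restrict
        (Set.Icc (a 0) (b 0) ×ˢ (Set.Icc (a 1) (b 1) ∩ (fun t => t + h) ⁻¹' (Set.Icc (a 1) (b 1))))
      = (volume.restrict (Set.Icc (a 0) (b 0))).prod
          (volume.restrict (Set.Icc (a 1) (b 1) ∩ (fun t => t + h) ⁻¹' (Set.Icc (a 1) (b 1)))) := by
    rw [Measure.volume_eq_prod, Measure.prod_restrict]
  have hset : oscEqv ⁻¹' (Set.Icc (a 0) (b 0) ×ˢ (Set.Icc (a 1) (b 1) ∩ (fun t => t + h) ⁻¹' (Set.Icc (a 1) (b 1))))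
      = boxShift a b (fun i => (((![0,1] : Fin 2 → ℕ) i : ℕ) : ℝ) * (![0, h] : Fin 2 → ℝ) i) := by
    ext x
    simp only [Set.mem_preimage, Set.mem_prod, Set.mem_inter_iff, boxShift, Set.mem_setOf_eq,
      Fin.forall_fin_two]
    norm_num
  calc (∫⁻ t, ((Set.Icc (a 1) (b 1)).indicator 1 t) *
      (((Set.Icc (a 1) (b 1)).indicator 1 (t + h)) *
        ∫⁻ s in Set.Icc (a 0) (b 0),
          ENNReal.ofReal (|f (oscEqv.symm (s, t + h)) - f (oscEqv.symm (s, t))| ^ p)))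
      = ∫⁻ t in Set.Icc (a 1) (b 1) ∩ (fun t => t + h) ⁻¹' (Set.Icc (a 1) (b 1)),
          ∫⁻ s in Set.Icc (a 0) (b 0),
            ENNReal.ofReal (|f (oscEqv.symm (s, t + h)) - f (oscEqv.symm (s, t))| ^ p) := by
        rw [← lintegral_indicator hS1]
        refine lintegral_congr fun t => ?_
        by_cases hs : t ∈ Set.Icc (a 1) (b 1)
        · by_cases hsh : t + h ∈ Set.Icc (a 1) (b 1)
          · have hm1 : t ∈ Set.Icc (a 1) (b 1) ∩ (fun t => t + h) ⁻¹' Set.Icc (a 1) (b 1) :=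
              ⟨hs, hsh⟩
            rw [Set.indicator_of_mem hm1, Set.indicator_of_mem hs, Set.indicator_of_mem hsh]
            simp
          · have hm1 : t ∉ Set.Icc (a 1) (b 1) ∩ (fun t => t + h) ⁻¹' Set.Icc (a 1) (b 1) :=
              fun hc => hsh hc.2
            rw [Set.indicator_of_notMem hm1, Set.indicator_of_notMem hsh]
            simp
        · have hm1 : t ∉ Set.Icc (a 1) (b 1) ∩ (fun t => t + h) ⁻¹' Set.Icc (a 1) (b 1) :=
              fun hc => hs hc.1
          rw [Set.indicator_of_notMem hm1, Set.indicator_of_notMem hs]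
          simp
    _ = ∫⁻ z in Set.Icc (a 0) (b 0) ×ˢ (Set.Icc (a 1) (b 1) ∩ (fun t => t + h) ⁻¹' (Set.Icc (a 1) (b 1))),
          ENNReal.ofReal (|f (oscEqv.symm (z.1, z.2 + h)) - f (oscEqv.symm (z.1, z.2))| ^ p) := by
        rw [hpr]
        exact (lintegral_prod_symm _ (Measurable.aemeasurable (meas_aux hp0
          ((hm.comp oscEqv.symm.measurable).comp
            (measurable_fst.prodMk (measurable_snd.add_const h)))
          ((hm.comp oscEqv.symm.measurable).comp
            (measurable_fst.prodMk measurable_snd))))).symm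
    _ = ∫⁻ x in oscEqv ⁻¹' (Set.Icc (a 0) (b 0) ×ˢ (Set.Icc (a 1) (b 1) ∩ (fun t => t + h) ⁻¹' (Set.Icc (a 1) (b 1)))),
          ENNReal.ofReal (|f (oscEqv.symm ((oscEqv x).1, (oscEqv x).2 + h)) - f (oscEqv.symm ((oscEqv x).1, (oscEqv x).2))| ^ p) :=
        (transfer _ (hI0.prod hS1) _).symm
    _ = ∫⁻ x in boxShift a b (fun i => (((![0,1] : Fin 2 → ℕ) i : ℕ) : ℝ) * (![0, h] : Fin 2 → ℝ) i),
          ENNReal.ofReal (|mixedDiff ![0,1] ![0,h] f x| ^ p) := by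
        rw [hset]
        refine lintegral_congr fun x => ?_
        congr 2
        rw [mixedDiff_01]
        have k1 : oscEqv.symm ((oscEqv x).1, (oscEqv x).2 + h)
            = x + ![0, (![0, h] : Fin 2 → ℝ) 1] := by
          funext i
          match i with
          | 0 =>
            show x 0 = x 0 + ![(0:ℝ), (![0, h] : Fin 2 → ℝ) 1] 0
            simp
          | 1 =>
            show x 1 + h = x 1 + ![(0:ℝ), (![0, h] : Fin 2 → ℝ) 1] 1
            simp
        have k2 : oscEqv.symm ((oscEqv x).1, (oscEqv x).2) = x := by
          funext i
          match i with
          | 0 => rfl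
          | 1 => rfl
        rw [k1, k2]
    _ = (eLpNorm (mixedDiff ![0,1] ![0,h] f) (ENNReal.ofReal p)
          (volume.restrict (boxShift a b (fun i => (((![0,1] : Fin 2 → ℕ) i : ℕ) : ℝ) * (![0, h] : Fin 2 → ℝ) i)))) ^ p :=
        (pow_eLpNorm hp0 _ _).symm
    _ ≤ (modulus (ENNReal.ofReal p) ![0, 1] f a b (fun i => b i - a i)) ^ p := by
        apply ENNReal.rpow_le_rpow _ hp0.le
        have hmem : (![0, h] : Fin 2 → ℝ) ∈ {h' : Fin 2 → ℝ | ∀ i, |h' i| ≤ b i - a i} := by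
          rw [Set.mem_setOf_eq, Fin.forall_fin_two]
          constructor
          · simpa using sub_nonneg.mpr (hab 0)
          · simpa using hh
        exact le_biSup (fun h' : Fin 2 → ℝ =>
          pNorm (ENNReal.ofReal p) (mixedDiff ![0,1] h' f)
            (boxShift a b fun i => (((![0,1] : Fin 2 → ℕ) i : ℕ) : ℝ) * h' i)) hmem

lemma osc_main (p : ℝ) (hp0 : 0 < p) (hp1 : p ≤ 1)
    (a b : Fin 2 → ℝ) (hab : ∀ i, a i ≤ b i) (f : (Fin 2 → ℝ) → ℝ) (hm : Measurable f) :
    (∫⁻ x in box a b, ∫⁻ y in box a b, ENNReal.ofReal (|f x - f y| ^ p)) ≤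
      2 * ENNReal.ofReal (b 0 - a 0) * ENNReal.ofReal (b 1 - a 1) *
        ((modulus (ENNReal.ofReal p) ![1, 0] f a b (fun i => b i - a i)) ^ p +
          (modulus (ENNReal.ofReal p) ![0, 1] f a b (fun i => b i - a i)) ^ p) := by
  have hI0 : MeasurableSet (Set.Icc (a 0) (b 0)) := measurableSet_Icc
  have hI1 : MeasurableSet (Set.Icc (a 1) (b 1)) := measurableSet_Icc
  set g : ℝ × ℝ → ℝ := fun q => f (oscEqv.symm q) with hgdef
  have hg : Measurable g := hm.comp oscEqv.symm.measurable
  have hfy : ∀ y : Fin 2 → ℝ, f y = g (oscEqv y) := fun y => by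
    rw [hgdef]
    exact congrArg f (funext fun i => by match i with | 0 => rfl | 1 => rfl)
  set μ₀ : Measure ℝ := volume.restrict (Set.Icc (a 0) (b 0)) with hm0def
  set μ₁ : Measure ℝ := volume.restrict (Set.Icc (a 1) (b 1)) with hm1def
  have hbox : box a b = oscEqv ⁻¹' (Set.Icc (a 0) (b 0) ×ˢ Set.Icc (a 1) (b 1)) := by
    ext x
    simp only [_root_.box, Set.mem_pi, Set.mem_univ, forall_true_left, Set.mem_preimage,
      Set.mem_prod]
    exact Fin.forall_fin_two
  have hpr0 : (volume : Measure (ℝ × ℝ)).restrict (Set.Icc (a 0) (b 0) ×ˢ Set.Icc (a 1) (b 1))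
      = μ₀.prod μ₁ := by
    rw [hm0def, hm1def, Measure.volume_eq_prod, Measure.prod_restrict]
  have hm1univ : μ₁ Set.univ = ENNReal.ofReal (b 1 - a 1) := by
    rw [hm1def, Measure.restrict_apply_univ, Real.volume_Icc]
  have hm0univ : μ₀ Set.univ = ENNReal.ofReal (b 0 - a 0) := by
    rw [hm0def, Measure.restrict_apply_univ, Real.volume_Icc]
  have hL1 : ∀ c : ℝ, (∫⁻ y in box a b, ENNReal.ofReal (|c - f y| ^ p))
      = ∫⁻ q', ENNReal.ofReal (|c - g q'| ^ p) ∂(μ₀.prod μ₁) := by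
    intro c
    rw [← hpr0, hbox]
    calc (∫⁻ y in oscEqv ⁻¹' (Set.Icc (a 0) (b 0) ×ˢ Set.Icc (a 1) (b 1)), ENNReal.ofReal (|c - f y| ^ p))
        = ∫⁻ y in oscEqv ⁻¹' (Set.Icc (a 0) (b 0) ×ˢ Set.Icc (a 1) (b 1)),
            ENNReal.ofReal (|c - g (oscEqv y)| ^ p) := lintegral_congr fun y => by rw [hfy y]
      _ = ∫⁻ q' in Set.Icc (a 0) (b 0) ×ˢ Set.Icc (a 1) (b 1), ENNReal.ofReal (|c - g q'| ^ p) :=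
          transfer _ (hI0.prod hI1) (fun q' => ENNReal.ofReal (|c - g q'| ^ p))
  have hL : (∫⁻ x in box a b, ∫⁻ y in box a b, ENNReal.ofReal (|f x - f y| ^ p))
      = ∫⁻ z, ENNReal.ofReal (|g z.1 - g z.2| ^ p) ∂((μ₀.prod μ₁).prod (μ₀.prod μ₁)) := by
    calc (∫⁻ x in box a b, ∫⁻ y in box a b, ENNReal.ofReal (|f x - f y| ^ p))
        = ∫⁻ x in box a b, ∫⁻ q', ENNReal.ofReal (|f x - g q'| ^ p) ∂(μ₀.prod μ₁) :=
          lintegral_congr fun x => hL1 (f x)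
      _ = ∫⁻ x in oscEqv ⁻¹' (Set.Icc (a 0) (b 0) ×ˢ Set.Icc (a 1) (b 1)),
            ∫⁻ q', ENNReal.ofReal (|g (oscEqv x) - g q'| ^ p) ∂(μ₀.prod μ₁) := by
          rw [hbox]
          exact lintegral_congr fun x => by rw [hfy x]
      _ = ∫⁻ q in Set.Icc (a 0) (b 0) ×ˢ Set.Icc (a 1) (b 1),
            ∫⁻ q', ENNReal.ofReal (|g q - g q'| ^ p) ∂(μ₀.prod μ₁) :=
          transfer _ (hI0.prod hI1)
            (fun q => ∫⁻ q', ENNReal.ofReal (|g q - g q'| ^ p) ∂(μ₀.prod μ₁))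
      _ = ∫⁻ q, (∫⁻ q', ENNReal.ofReal (|g q - g q'| ^ p) ∂(μ₀.prod μ₁)) ∂(μ₀.prod μ₁) := by
          rw [hpr0]
      _ = ∫⁻ z, ENNReal.ofReal (|g z.1 - g z.2| ^ p) ∂((μ₀.prod μ₁).prod (μ₀.prod μ₁)) :=
          (lintegral_prod _ (meas_aux hp0 (hg.comp measurable_fst)
            (hg.comp measurable_snd)).aemeasurable).symm
  have hF1 : Measurable fun z : (ℝ × ℝ) × (ℝ × ℝ) =>
      ENNReal.ofReal (|g z.1 - g (z.2.1, z.1.2)| ^ p) :=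
    meas_aux hp0 (hg.comp measurable_fst)
      (hg.comp ((measurable_fst.comp measurable_snd).prodMk (measurable_snd.comp measurable_fst)))
  have hF2 : Measurable fun z : (ℝ × ℝ) × (ℝ × ℝ) =>
      ENNReal.ofReal (|g (z.2.1, z.1.2) - g z.2| ^ p) :=
    meas_aux hp0
      (hg.comp ((measurable_fst.comp measurable_snd).prodMk (measurable_snd.comp measurable_fst)))
      (hg.comp measurable_snd)
  have hA : (∫⁻ z, ENNReal.ofReal (|g z.1 - g (z.2.1, z.1.2)| ^ p)
        ∂((μ₀.prod μ₁).prod (μ₀.prod μ₁)))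
      ≤ 2 * ENNReal.ofReal (b 0 - a 0) *
          (modulus (ENNReal.ofReal p) ![1, 0] f a b (fun i => b i - a i)) ^ p *
          ENNReal.ofReal (b 1 - a 1) := by
    calc (∫⁻ z, ENNReal.ofReal (|g z.1 - g (z.2.1, z.1.2)| ^ p)
          ∂((μ₀.prod μ₁).prod (μ₀.prod μ₁)))
        = ∫⁻ q, (∫⁻ q', ENNReal.ofReal (|g q - g (q'.1, q.2)| ^ p) ∂(μ₀.prod μ₁)) ∂(μ₀.prod μ₁) :=
          lintegral_prod _ hF1.aemeasurable
      _ = ∫⁻ q, ((∫⁻ s', ENNReal.ofReal (|g q - g (s', q.2)| ^ p) ∂μ₀) *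
            ENNReal.ofReal (b 1 - a 1)) ∂(μ₀.prod μ₁) := by
          refine lintegral_congr fun q => ?_
          calc (∫⁻ q', ENNReal.ofReal (|g q - g (q'.1, q.2)| ^ p) ∂(μ₀.prod μ₁))
              = ∫⁻ s', (∫⁻ t', ENNReal.ofReal (|g q - g (s', q.2)| ^ p) ∂μ₁) ∂μ₀ :=
                lintegral_prod _ (meas_aux hp0 measurable_const
                  (hg.comp (measurable_fst.prodMk measurable_const))).aemeasurable
            _ = ∫⁻ s', (ENNReal.ofReal (|g q - g (s', q.2)| ^ p) * ENNReal.ofReal (b 1 - a 1)) ∂μ₀ :=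
                lintegral_congr fun s' => by rw [lintegral_const, hm1univ]
            _ = _ := lintegral_mul_const' _ _ ENNReal.ofReal_ne_top
      _ = (∫⁻ q, (∫⁻ s', ENNReal.ofReal (|g q - g (s', q.2)| ^ p) ∂μ₀) ∂(μ₀.prod μ₁)) *
            ENNReal.ofReal (b 1 - a 1) :=
          lintegral_mul_const' _ _ ENNReal.ofReal_ne_top
      _ = (∫⁻ s, (∫⁻ t, (∫⁻ s', ENNReal.ofReal (|g (s, t) - g (s', t)| ^ p) ∂μ₀) ∂μ₁) ∂μ₀) *
            ENNReal.ofReal (b 1 - a 1) := by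
          congr 1
          exact lintegral_prod _ (Measurable.lintegral_prod_right'
            (meas_aux hp0 (hg.comp measurable_fst)
              (hg.comp (measurable_snd.prodMk (measurable_snd.comp measurable_fst))))).aemeasurable
      _ = (∫⁻ s, (∫⁻ s', (∫⁻ t, ENNReal.ofReal (|g (s', t) - g (s, t)| ^ p) ∂μ₁) ∂μ₀) ∂μ₀) *
            ENNReal.ofReal (b 1 - a 1) := by
          congr 1
          refine lintegral_congr fun s => ?_
          exact (lintegral_lintegral_swap
            (f := fun t s' => ENNReal.ofReal (|g (s, t) - g (s', t)| ^ p))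
            (meas_aux hp0 (hg.comp (measurable_const.prodMk measurable_fst))
              (hg.comp (measurable_snd.prodMk measurable_fst))).aemeasurable).trans
            (lintegral_congr fun s' => lintegral_congr fun t => by rw [abs_sub_comm])
      _ ≤ (2 * ENNReal.ofReal (b 0 - a 0) *
            (modulus (ENNReal.ofReal p) ![1, 0] f a b (fun i => b i - a i)) ^ p) *
            ENNReal.ofReal (b 1 - a 1) := by
          apply mul_le_mul_left
          refine osc_sub (le_refl (b 0 - a 0))
            (fun s s' => ∫⁻ t, ENNReal.ofReal (|g (s', t) - g (s, t)| ^ p) ∂μ₁)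
            (Measurable.lintegral_prod_right'
              (meas_aux hp0 (hg.comp ((measurable_snd.comp measurable_fst).prodMk measurable_snd))
                (hg.comp ((measurable_fst.comp measurable_fst).prodMk measurable_snd))))
            _ (fun h hh => ?_)
          exact modBound0 p hp0 a b hab f hm h hh
  have hB : (∫⁻ z, ENNReal.ofReal (|g (z.2.1, z.1.2) - g z.2| ^ p)
        ∂((μ₀.prod μ₁).prod (μ₀.prod μ₁)))
      ≤ ENNReal.ofReal (b 0 - a 0) *
          (2 * ENNReal.ofReal (b 1 - a 1) *
            (modulus (ENNReal.ofReal p) ![0, 1] f a b (fun i => b i - a i)) ^ p) := by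
    calc (∫⁻ z, ENNReal.ofReal (|g (z.2.1, z.1.2) - g z.2| ^ p)
          ∂((μ₀.prod μ₁).prod (μ₀.prod μ₁)))
        = ∫⁻ q, (∫⁻ q', ENNReal.ofReal (|g (q'.1, q.2) - g q'| ^ p) ∂(μ₀.prod μ₁)) ∂(μ₀.prod μ₁) :=
          lintegral_prod _ hF2.aemeasurable
      _ = ∫⁻ s, (∫⁻ t, (∫⁻ q', ENNReal.ofReal (|g (q'.1, t) - g q'| ^ p) ∂(μ₀.prod μ₁)) ∂μ₁) ∂μ₀ :=
          lintegral_prod _ (Measurable.lintegral_prod_right'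
            (meas_aux hp0
              (hg.comp ((measurable_fst.comp measurable_snd).prodMk
                (measurable_snd.comp measurable_fst)))
              (hg.comp measurable_snd))).aemeasurable
      _ = (∫⁻ t, (∫⁻ q', ENNReal.ofReal (|g (q'.1, t) - g q'| ^ p) ∂(μ₀.prod μ₁)) ∂μ₁) *
            ENNReal.ofReal (b 0 - a 0) := by
          rw [lintegral_const, hm0univ]
      _ = (∫⁻ t, (∫⁻ s', (∫⁻ t', ENNReal.ofReal (|g (s', t) - g (s', t')| ^ p) ∂μ₁) ∂μ₀) ∂μ₁) *
            ENNReal.ofReal (b 0 - a 0) := by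
          congr 1
          exact lintegral_congr fun t => lintegral_prod _
            (meas_aux hp0 (hg.comp (measurable_fst.prodMk measurable_const))
              (hg.comp (measurable_fst.prodMk measurable_snd))).aemeasurable
      _ = (∫⁻ t, (∫⁻ t', (∫⁻ s', ENNReal.ofReal (|g (s', t') - g (s', t)| ^ p) ∂μ₀) ∂μ₁) ∂μ₁) *
            ENNReal.ofReal (b 0 - a 0) := by
          congr 1
          refine lintegral_congr fun t => ?_
          exact (lintegral_lintegral_swap
            (f := fun s' t' => ENNReal.ofReal (|g (s', t) - g (s', t')| ^ p))
            (meas_aux hp0 (hg.comp (measurable_fst.prodMk measurable_const))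
              (hg.comp (measurable_fst.prodMk measurable_snd))).aemeasurable).trans
            (lintegral_congr fun t' => lintegral_congr fun s' => by rw [abs_sub_comm])
      _ ≤ (2 * ENNReal.ofReal (b 1 - a 1) *
            (modulus (ENNReal.ofReal p) ![0, 1] f a b (fun i => b i - a i)) ^ p) *
            ENNReal.ofReal (b 0 - a 0) := by
          apply mul_le_mul_left
          refine osc_sub (le_refl (b 1 - a 1))
            (fun t t' => ∫⁻ s', ENNReal.ofReal (|g (s', t') - g (s', t)| ^ p) ∂μ₀)
            (Measurable.lintegral_prod_right'
              (meas_aux hp0 (hg.comp (measurable_snd.prodMk (measurable_snd.comp measurable_fst)))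
                (hg.comp (measurable_snd.prodMk (measurable_fst.comp measurable_fst)))))
            _ (fun h hh => ?_)
          exact modBound1 p hp0 a b hab f hm h hh
      _ = ENNReal.ofReal (b 0 - a 0) *
            (2 * ENNReal.ofReal (b 1 - a 1) *
              (modulus (ENNReal.ofReal p) ![0, 1] f a b (fun i => b i - a i)) ^ p) := by
          ring
  rw [hL]
  calc (∫⁻ z, ENNReal.ofReal (|g z.1 - g z.2| ^ p) ∂((μ₀.prod μ₁).prod (μ₀.prod μ₁)))
      ≤ ∫⁻ z, (ENNReal.ofReal (|g z.1 - g (z.2.1, z.1.2)| ^ p) +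
            ENNReal.ofReal (|g (z.2.1, z.1.2) - g z.2| ^ p))
          ∂((μ₀.prod μ₁).prod (μ₀.prod μ₁)) :=
        lintegral_mono fun z => tri hp0 hp1 _ _ _
    _ = (∫⁻ z, ENNReal.ofReal (|g z.1 - g (z.2.1, z.1.2)| ^ p)
          ∂((μ₀.prod μ₁).prod (μ₀.prod μ₁))) +
        ∫⁻ z, ENNReal.ofReal (|g (z.2.1, z.1.2) - g z.2| ^ p)
          ∂((μ₀.prod μ₁).prod (μ₀.prod μ₁)) :=
        lintegral_add_left hF1 _
    _ ≤ 2 * ENNReal.ofReal (b 0 - a 0) *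
          (modulus (ENNReal.ofReal p) ![1, 0] f a b (fun i => b i - a i)) ^ p *
          ENNReal.ofReal (b 1 - a 1) +
        ENNReal.ofReal (b 0 - a 0) *
          (2 * ENNReal.ofReal (b 1 - a 1) *
            (modulus (ENNReal.ofReal p) ![0, 1] f a b (fun i => b i - a i)) ^ p) :=
        add_le_add hA hB
    _ = 2 * ENNReal.ofReal (b 0 - a 0) * ENNReal.ofReal (b 1 - a 1) *
          ((modulus (ENNReal.ofReal p) ![1, 0] f a b (fun i => b i - a i)) ^ p +
            (modulus (ENNReal.ofReal p) ![0, 1] f a b (fun i => b i - a i)) ^ p) := by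
        ring

end OscillationAux

/-- **Double-integral oscillation bound, `d = 2`, `0 < p ≤ 1`.**
For `Q = [a₁,b₁] × [a₂,b₂]` and `f ∈ L_p(Q)`,
`∫_Q ∫_Q |f(x) − f(y)|^p dx dy ≤ 2 δ₁ δ₂ [ω_{(1,0)}(f,δ(Q))_{p,Q}^p + ω_{(0,1)}(f,δ(Q))_{p,Q}^p]`. -/
theorem double_integral_oscillation (p : ℝ) (hp0 : 0 < p) (hp1 : p ≤ 1)
    (a b : Fin 2 → ℝ) (hab : ∀ i, a i ≤ b i) (f : (Fin 2 → ℝ) → ℝ)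
    (hf : MemLp f (ENNReal.ofReal p) (volume.restrict (box a b))) :
    (∫⁻ x in box a b, ∫⁻ y in box a b, ENNReal.ofReal (|f x - f y| ^ p)) ≤
      2 * ENNReal.ofReal (b 0 - a 0) * ENNReal.ofReal (b 1 - a 1) *
        ((modulus (ENNReal.ofReal p) ![1, 0] f a b (fun i => b i - a i)) ^ p +
          (modulus (ENNReal.ofReal p) ![0, 1] f a b (fun i => b i - a i)) ^ p) := by
  classical
  have hboxm : MeasurableSet (box a b) := MeasurableSet.univ_pi fun i => measurableSet_Icc
  set f' : (Fin 2 → ℝ) → ℝ := hf.1.mk f with hf'def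
  have hmf' : Measurable f' := hf.1.stronglyMeasurable_mk.measurable
  have hae : f =ᵐ[volume.restrict (box a b)] f' := hf.1.ae_eq_mk
  set t : Set (Fin 2 → ℝ) := toMeasurable (volume.restrict (box a b)) {x | f x ≠ f' x}
    with htdef
  have htm : MeasurableSet t := measurableSet_toMeasurable _ _
  have htnull : (volume.restrict (box a b)) t = 0 := by
    rw [htdef, measure_toMeasurable]
    exact ae_iff.mp hae
  have hNnull : volume (t ∩ box a b) = 0 := by
    rw [← Measure.restrict_apply htm]
    exact htnull
  have hsub : ∀ x, x ∈ box a b → f x ≠ f' x → x ∈ t ∩ box a b := fun x hx hne =>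
    ⟨subset_toMeasurable _ _ hne, hx⟩
  have key : ∀ (v : Fin 2 → ℝ) (S : Set (Fin 2 → ℝ)), MeasurableSet S → S ⊆ box a b →
      (∀ x ∈ S, x + v ∈ box a b) →
      eLpNorm (fun x => f' (x + v) - f' x) (ENNReal.ofReal p) (volume.restrict S)
        = eLpNorm (fun x => f (x + v) - f x) (ENNReal.ofReal p) (volume.restrict S) := by
    intro v S hS hS1 hS2
    apply eLpNorm_congr_ae
    have hnull2 : volume ((t ∩ box a b) ∪ (fun x => x + v) ⁻¹' (t ∩ box a b)) = 0 :=
      measure_union_null hNnull (by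
        rw [measure_preimage_add_right]
        exact hNnull)
    have hth : ∀ᵐ x ∂(volume : Measure (Fin 2 → ℝ)),
        x ∉ (t ∩ box a b) ∪ (fun x => x + v) ⁻¹' (t ∩ box a b) :=
      measure_eq_zero_iff_ae_notMem.mp hnull2
    apply (ae_restrict_iff' hS).mpr
    filter_upwards [hth] with x hx hxS
    have h1 : f (x + v) = f' (x + v) := by
      by_contra hc
      exact hx (Or.inr (hsub _ (hS2 x hxS) hc))
    have h2 : f x = f' x := by
      by_contra hc
      exact hx (Or.inl (hsub _ (hS1 hxS) hc))
    rw [h1, h2]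
  have hboxShift : ∀ (y : Fin 2 → ℝ),
      boxShift a b y = box a b ∩ (fun x => x + y) ⁻¹' box a b := by
    intro y
    ext x
    constructor
    · intro hh
      exact ⟨fun i _ => (hh i).1, fun i _ => (hh i).2⟩
    · intro hh i
      exact ⟨hh.1 i trivial, hh.2 i trivial⟩
  have hbsm : ∀ y, MeasurableSet (boxShift a b y) := fun y => by
    rw [hboxShift]
    exact hboxm.inter (hboxm.preimage (measurable_add_const y))
  have hmod0 : modulus (ENNReal.ofReal p) ![1, 0] f' a b (fun i => b i - a i)
      = modulus (ENNReal.ofReal p) ![1, 0] f a b (fun i => b i - a i) := by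
    unfold modulus
    refine iSup_congr fun h => iSup_congr fun hh => ?_
    unfold pNorm
    have e1 : ∀ (F : (Fin 2 → ℝ) → ℝ),
        mixedDiff ![1,0] h F = fun x => F (x + ![h 0, 0]) - F x :=
      fun F => funext fun x => mixedDiff_10 h F x
    rw [e1, e1]
    apply key ![h 0, 0]
    · exact hbsm _
    · intro x hx i _
      exact (hx i).1
    · intro x hx i _
      match i with
      | 0 => simpa using (hx 0).2
      | 1 => simpa using (hx 1).2
  have hmod1 : modulus (ENNReal.ofReal p) ![0, 1] f' a b (fun i => b i - a i)
      = modulus (ENNReal.ofReal p) ![0, 1] f a b (fun i => b i - a i) := by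
    unfold modulus
    refine iSup_congr fun h => iSup_congr fun hh => ?_
    unfold pNorm
    have e1 : ∀ (F : (Fin 2 → ℝ) → ℝ),
        mixedDiff ![0,1] h F = fun x => F (x + ![0, h 1]) - F x :=
      fun F => funext fun x => mixedDiff_01 h F x
    rw [e1, e1]
    apply key ![0, h 1]
    · exact hbsm _
    · intro x hx i _
      exact (hx i).1
    · intro x hx i _
      match i with
      | 0 => simpa using (hx 0).2
      | 1 => simpa using (hx 1).2
  have hLHSeq : (∫⁻ x in box a b, ∫⁻ y in box a b, ENNReal.ofReal (|f x - f y| ^ p))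
      = ∫⁻ x in box a b, ∫⁻ y in box a b, ENNReal.ofReal (|f' x - f' y| ^ p) := by
    apply lintegral_congr_ae
    filter_upwards [hae] with x hx
    apply lintegral_congr_ae
    filter_upwards [hae] with y hy
    rw [hx, hy]
  rw [hLHSeq, ← hmod0, ← hmod1]
  exact osc_main p hp0 hp1 a b hab f' hmf'
end
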